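/- arXiv:2109.15148 — 6 statements merged into one kernel-verified Lean document; each statement's English description precedes it below -/
import Mathlib

section
/- For every prime p with p ≡ 5 (mod 6) and p > 11, and for all x, y, z, t ∈ S, the following hold in F_p: x + y ≠ 0, x + y + z + t ≠ 0, x + 5y ≠ 0, and x² + x·y + y² ≠ 0. -/
/-- The set `S ⊆ F_p` of elements whose least nonnegative representative `k`
satisfies `1 ≤ k ≤ (p-5)/6` and `k ≡ 1 (mod 3)`. -/
def Svertex (p : ℕ) : Set (ZMod p) :=
  {x | 1 ≤ x.val ∧ x.val ≤ (p - 5) / 6 ∧ x.val % 3 = 1}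

theorem stmt_0 (p : ℕ) (hp : p.Prime) (h5 : p % 6 = 5) (h11 : 11 < p)
    (x y z t : ZMod p) (hx : x ∈ Svertex p) (hy : y ∈ Svertex p)
    (hz : z ∈ Svertex p) (ht : t ∈ Svertex p) :
    x + y ≠ 0 ∧ x + y + z + t ≠ 0 ∧ x + 5 * y ≠ 0 ∧
      x ^ 2 + x * y + y ^ 2 ≠ 0 := by
  haveI : Fact p.Prime := ⟨hp⟩
  obtain ⟨hx1, hx2, -⟩ := hx
  obtain ⟨hy1, hy2, -⟩ := hy
  obtain ⟨hz1, hz2, -⟩ := hz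
  obtain ⟨ht1, ht2, -⟩ := ht
  have hB : (p - 5) / 6 * 6 ≤ p - 5 := Nat.div_mul_le_self _ _
  have key : ∀ n : ℕ, 0 < n → n < p → (n : ZMod p) ≠ 0 := by
    intro n h1 h2 h0
    rw [ZMod.natCast_eq_zero_iff] at h0
    exact absurd (Nat.le_of_dvd h1 h0) (by omega)
  have hxv : ((x.val : ℕ) : ZMod p) = x := ZMod.natCast_rightInverse x
  have hyv : ((y.val : ℕ) : ZMod p) = y := ZMod.natCast_rightInverse y
  have hzv : ((z.val : ℕ) : ZMod p) = z := ZMod.natCast_rightInverse z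
  have htv : ((t.val : ℕ) : ZMod p) = t := ZMod.natCast_rightInverse t
  refine ⟨?_, ?_, ?_, ?_⟩
  · have := key (x.val + y.val) (by omega) (by omega)
    rwa [Nat.cast_add, hxv, hyv] at this
  · have := key (x.val + y.val + z.val + t.val) (by omega) (by omega)
    rwa [Nat.cast_add, Nat.cast_add, Nat.cast_add, hxv, hyv, hzv, htv] at this
  · have := key (x.val + 5 * y.val) (by omega) (by omega)
    rwa [Nat.cast_add, Nat.cast_mul, hxv, hyv] at this
  · intro h0
    have hyne : y ≠ 0 := by
      intro h; rw [h, ZMod.val_zero] at hy1; omega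
    have pow_self : ∀ a : ZMod p, a ^ (2 * p - 1) = a := by
      intro a
      rcases eq_or_ne a 0 with rfl | ha
      · rw [zero_pow]; omega
      · have h1 : 2 * p - 1 = (p - 1) * 2 + 1 := by omega
        rw [h1, pow_add, pow_mul, ZMod.pow_card_sub_one_eq_one ha, one_pow, pow_one, one_mul]
    have hcube : x ^ 3 = y ^ 3 := by
      have : x ^ 3 - y ^ 3 = (x - y) * (x ^ 2 + x * y + y ^ 2) := by ring
      rw [h0, mul_zero, sub_eq_zero] at this
      exact this
    have h3k : 3 * ((2 * p - 1) / 3) = 2 * p - 1 := by omega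
    have hxy : x = y := by
      calc x = x ^ (2 * p - 1) := (pow_self x).symm
        _ = (x ^ 3) ^ ((2 * p - 1) / 3) := by rw [← pow_mul, h3k]
        _ = (y ^ 3) ^ ((2 * p - 1) / 3) := by rw [hcube]
        _ = y ^ (2 * p - 1) := by rw [← pow_mul, h3k]
        _ = y := pow_self y
    rw [hxy] at h0
    have h3y : (3 : ZMod p) * y ^ 2 = 0 := by rw [← h0]; ring
    rcases mul_eq_zero.mp h3y with h | h
    · exact key 3 (by omega) (by omega) (by exact_mod_cast h)
    · exact hyne (pow_eq_zero_iff (by omega) |>.mp h)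
end

section
/- If x and y are distinct vertices of G_p that have a common neighbour (i.e., there exists u ∈ V adjacent in G_p to both x and y), then x₁ ≠ y₁, x₂ ≠ y₂, and x₃ ≠ y₃. -/
/-- The vertex set `V = S × F_p × F_p` of the graph `G_p`. -/
def Vsub (p : ℕ) : Type :=
  {v : ZMod p × ZMod p × ZMod p // v.1 ∈ Svertex p}

/-- The graph `G_p` on `V = S × F_p × F_p`: distinct vertices `x, y` are adjacent iff
`x₂ + y₃ = x₁·y₁²` and `x₃ + y₂ = x₁²·y₁`. -/
def Gp (p : ℕ) : SimpleGraph (Vsub p) where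
  Adj x y := x ≠ y ∧ x.val.2.1 + y.val.2.2 = x.val.1 * y.val.1 ^ 2 ∧
    x.val.2.2 + y.val.2.1 = x.val.1 ^ 2 * y.val.1
  symm := ⟨by
    rintro x y ⟨hne, h1, h2⟩
    exact ⟨hne.symm, by linear_combination h2, by linear_combination h1⟩⟩
  loopless := ⟨by rintro x ⟨h, -⟩; exact h rfl⟩

theorem stmt_1 (p : ℕ) (hp : p.Prime) (h5 : p % 6 = 5) (h11 : 11 < p)
    (x y : Vsub p) (hxy : x ≠ y) (u : Vsub p)
    (hux : (Gp p).Adj u x) (huy : (Gp p).Adj u y) :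
    x.val.1 ≠ y.val.1 ∧ x.val.2.1 ≠ y.val.2.1 ∧ x.val.2.2 ≠ y.val.2.2 := by
  haveI : Fact p.Prime := ⟨hp⟩
  obtain ⟨_, hx1, hx2⟩ := hux
  obtain ⟨_, hy1, hy2⟩ := huy
  have hu0 : u.val.1 ≠ 0 := by
    intro h
    have := u.property.1
    rw [h] at this
    simp [ZMod.val_zero] at this
  have h1 : x.val.1 ≠ y.val.1 := by
    intro h
    apply hxy
    apply Subtype.ext
    have e2 : x.val.2.2 = y.val.2.2 := by linear_combination hx1 - hy1 + u.val.1 * (x.val.1 + y.val.1) * h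
    have e1 : x.val.2.1 = y.val.2.1 := by linear_combination hx2 - hy2 + u.val.1 ^ 2 * h
    exact Prod.ext h (Prod.ext e1 e2)
  refine ⟨h1, ?_, ?_⟩
  · intro h
    have : u.val.1 ^ 2 * (x.val.1 - y.val.1) = 0 := by linear_combination hy2 - hx2 + h
    rcases mul_eq_zero.mp this with h' | h'
    · exact absurd (pow_eq_zero_iff (by norm_num) |>.mp h') hu0
    · exact absurd (sub_eq_zero.mp h') h1
  · intro h
    have hsq : u.val.1 * ((x.val.1 - y.val.1) * (x.val.1 + y.val.1)) = 0 := by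
      linear_combination hy1 - hx1 + h
    rcases mul_eq_zero.mp hsq with h' | h'
    · exact hu0 h'
    rcases mul_eq_zero.mp h' with h' | h'
    · exact absurd (sub_eq_zero.mp h') h1
    · -- x₁ = -y₁, impossible since both vals small
      have hx0 : x.val.1 ≠ 0 := by
        intro hz
        have := x.property.1
        rw [hz] at this
        simp [ZMod.val_zero] at this
      have hyeq : y.val.1 = -x.val.1 := by linear_combination h'
      have hv : (y.val.1).val = p - (x.val.1).val := by
        rw [hyeq, ZMod.neg_val, if_neg hx0]
      have hxb := x.property.2.1
      have hyb := y.property.2.1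
      have hxl := x.property.1
      rw [hv] at hyb
      omega
end

section
/- Let a, u, v, w, b, z, y, x be pairwise distinct vertices of G_q such that au, uv, vw, wb, bz, zy, yx, xa are all edges of G_q (so they form an 8-cycle). Then a₁ + b₁ = v₁ + y₁ and u₁ + z₁ = x₁ + w₁ in F_q. -/
/-- The graph `G_q` on `F_q⁴`: distinct vertices `u, v` are adjacent iff
`u₂ + v₂ = u₁·v₁`, `u₃ + v₄ = u₁·v₁²` and `u₄ + v₃ = u₁²·v₁`. -/
def Gq (F : Type*) [Field F] : SimpleGraph (F × F × F × F) where
  Adj u v := u ≠ v ∧ u.2.1 + v.2.1 = u.1 * v.1 ∧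
    u.2.2.1 + v.2.2.2 = u.1 * v.1 ^ 2 ∧ u.2.2.2 + v.2.2.1 = u.1 ^ 2 * v.1
  symm := ⟨by
    rintro u v ⟨hne, h1, h2, h3⟩
    exact ⟨hne.symm, by linear_combination h1, by linear_combination h3,
      by linear_combination h2⟩⟩
  loopless := ⟨fun u h => h.1 rfl⟩

/-- Two distinct neighbors of a common vertex in `Gq` have distinct first
coordinates: a neighbor is determined by its first coordinate. -/
lemma Gq_nbr_fst {F : Type*} [Field F] {P Q R : F × F × F × F}
    (h1 : (Gq F).Adj P Q) (h2 : (Gq F).Adj P R) (hne : Q ≠ R) : Q.1 ≠ R.1 := by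
  intro h
  obtain ⟨-, e1, e2, e3⟩ := h1
  obtain ⟨-, f1, f2, f3⟩ := h2
  apply hne
  have h21 : Q.2.1 = R.2.1 := by linear_combination e1 - f1 + P.1 * h
  have h222 : Q.2.2.2 = R.2.2.2 := by
    linear_combination e2 - f2 + P.1 * (Q.1 + R.1) * h
  have h221 : Q.2.2.1 = R.2.2.1 := by linear_combination e3 - f3 + P.1 ^ 2 * h
  exact Prod.ext h (Prod.ext h21 (Prod.ext h221 h222))

theorem stmt_11 (F : Type*) [Field F] [Fintype F] (hodd : Odd (Fintype.card F))
    (a u v w b z y x : F × F × F × F)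
    (hdist : [a, u, v, w, b, z, y, x].Pairwise (· ≠ ·))
    (hau : (Gq F).Adj a u) (huv : (Gq F).Adj u v) (hvw : (Gq F).Adj v w)
    (hwb : (Gq F).Adj w b) (hbz : (Gq F).Adj b z) (hzy : (Gq F).Adj z y)
    (hyx : (Gq F).Adj y x) (hxa : (Gq F).Adj x a) :
    a.1 + b.1 = v.1 + y.1 ∧ u.1 + z.1 = x.1 + w.1 := by
  -- extract the needed distinctness facts
  rcases hdist with _ | ⟨ha, hdist⟩
  rcases hdist with _ | ⟨hu, -⟩
  have hav : a ≠ v := ha v (by simp)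
  have hay : a ≠ y := ha y (by simp)
  have huw : u ≠ w := hu w (by simp)
  have hux : u ≠ x := hu x (by simp)
  -- distinct neighbors of a common vertex have distinct first coordinates
  have hVA : v.1 - a.1 ≠ 0 :=
    sub_ne_zero_of_ne (Gq_nbr_fst huv hau.symm hav.symm)
  have hYA : y.1 - a.1 ≠ 0 :=
    sub_ne_zero_of_ne (Gq_nbr_fst hyx.symm hxa hay.symm)
  have hWU : w.1 - u.1 ≠ 0 :=
    sub_ne_zero_of_ne (Gq_nbr_fst hvw huv.symm huw.symm)
  have hXU : x.1 - u.1 ≠ 0 :=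
    sub_ne_zero_of_ne (Gq_nbr_fst hxa.symm hau hux.symm)
  -- the three telescoping relations around the 8-cycle
  have H1 : a.1 * u.1 - u.1 * v.1 + v.1 * w.1 - w.1 * b.1 + b.1 * z.1
      - z.1 * y.1 + y.1 * x.1 - x.1 * a.1 = 0 := by
    linear_combination -hau.2.1 + huv.2.1 - hvw.2.1 + hwb.2.1 - hbz.2.1
      + hzy.2.1 - hyx.2.1 + hxa.2.1
  have H2 : a.1 * u.1 ^ 2 - u.1 ^ 2 * v.1 + v.1 * w.1 ^ 2 - w.1 ^ 2 * b.1
      + b.1 * z.1 ^ 2 - z.1 ^ 2 * y.1 + y.1 * x.1 ^ 2 - x.1 ^ 2 * a.1 = 0 := by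
    linear_combination -hau.2.2.1 + huv.2.2.2 - hvw.2.2.1 + hwb.2.2.2
      - hbz.2.2.1 + hzy.2.2.2 - hyx.2.2.1 + hxa.2.2.2
  have H3 : a.1 ^ 2 * u.1 - u.1 * v.1 ^ 2 + v.1 ^ 2 * w.1 - w.1 * b.1 ^ 2
      + b.1 ^ 2 * z.1 - z.1 * y.1 ^ 2 + y.1 ^ 2 * x.1 - x.1 * a.1 ^ 2 = 0 := by
    linear_combination -hau.2.2.2 + huv.2.2.1 - hvw.2.2.2 + hwb.2.2.1
      - hbz.2.2.2 + hzy.2.2.1 - hyx.2.2.2 + hxa.2.2.1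
  constructor
  · have key : (a.1 + b.1 - (v.1 + y.1))
        * ((v.1 - a.1) * ((x.1 - u.1) * (w.1 - u.1))) = 0 := by
      linear_combination
        (-(y.1 - a.1) * (z.1 - u.1) - (y.1 - a.1) * (w.1 - u.1)
          + (b.1 - a.1) * (x.1 - u.1) + (b.1 - a.1) * (z.1 - u.1)
          - (v.1 - a.1) * (w.1 - u.1)
          - 2 * u.1 * (y.1 - b.1) - 2 * a.1 * ((w.1 - u.1) - (x.1 - u.1))) * H1
        + (y.1 - b.1) * H2 + ((w.1 - u.1) - (x.1 - u.1)) * H3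
    have := (mul_eq_zero.1 key).resolve_right
      (mul_ne_zero hVA (mul_ne_zero hXU hWU))
    linear_combination this
  · have key : (u.1 + z.1 - (x.1 + w.1))
        * ((v.1 - a.1) * ((y.1 - a.1) * (x.1 - u.1))) = 0 := by
      linear_combination
        (-(y.1 - a.1) * (x.1 - u.1) - (y.1 - a.1) * (w.1 - u.1)
          + (b.1 - a.1) * (z.1 - u.1) - (b.1 - a.1) * (w.1 - u.1)
          + (v.1 - a.1) * (z.1 - u.1)
          - 2 * u.1 * (y.1 - v.1) - 2 * a.1 * ((w.1 - u.1) - (z.1 - u.1))) * H1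
        + (y.1 - v.1) * H2 + ((w.1 - u.1) - (z.1 - u.1)) * H3
    have := (mul_eq_zero.1 key).resolve_right
      (mul_ne_zero hVA (mul_ne_zero hYA hXU))
    linear_combination this
end

section
/- There exist a constant c > 0 and n₀ such that for every n ≥ n₀ there exists a simple graph on n vertices containing no copy of the theta graph θ_{4,3} that has at least c·n^{5/4} edges; that is, ex(n, θ_{4,3}) = Ω(n^{5/4}). -/
/-- The theta graph `θ_{4,3}`: two endpoints (`Sum.inl 0` and `Sum.inl 1`) joined by
three internally disjoint paths of length 4; vertex `Sum.inr (i, j)` is the `j`-th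
internal vertex of the `i`-th path. -/
def thetaFourThree : SimpleGraph (Fin 2 ⊕ Fin 3 × Fin 3) :=
  SimpleGraph.fromRel (fun u v =>
    match u, v with
    | Sum.inl a, Sum.inr ij => (a = 0 ∧ ij.2 = 0) ∨ (a = 1 ∧ ij.2 = 2)
    | Sum.inr ij, Sum.inr ij' => ij.1 = ij'.1 ∧ ij'.2 = ij.2 + 1 ∧ ij.2 ≠ 2
    | _, _ => False)

/-- `G` contains a copy of `H`. -/
def ContainsCopy {α β : Type*} (G : SimpleGraph α) (H : SimpleGraph β) : Prop :=
  ∃ f : β → α, Function.Injective f ∧ ∀ u v, H.Adj u v → G.Adj (f u) (f v)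

set_option linter.unusedVariables false

section Algebra
variable {F : Type*} [Field F]


/-- Point-point path facts. -/
lemma pt_path (A1 A2 A3 A4 B1 B2 B3 B4 R1 R2 R3 R4 L1 L2 L3 L4 M1 M2 M3 M4 : F)
    (h1 : L2 = A2 + A1*L1) (h2 : L3 = A3 + A1*L2) (h3 : L4 = A4 + A1*L1^2)
    (h4 : L2 = R2 + R1*L1) (h5 : L3 = R3 + R1*L2) (h6 : L4 = R4 + R1*L1^2)
    (h7 : M2 = R2 + R1*M1) (h8 : M3 = R3 + R1*M2) (h9 : M4 = R4 + R1*M1^2)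
    (h10 : M2 = B2 + B1*M1) (h11 : M3 = B3 + B1*M2) (h12 : M4 = B4 + B1*M1^2)
    (hra : R1 = A1 → R2 = A2 → R3 = A3 → R4 = A4 → False)
    (hrb : R1 = B1 → R2 = B2 → R3 = B3 → R4 = B4 → False)
    (hlm : L1 = M1 → L2 = M2 → L3 = M3 → L4 = M4 → False) :
    (A1 - R1) ≠ 0 ∧ (B1 - R1) ≠ 0 ∧ (L1 - M1) ≠ 0 ∧
    ((A1-R1)*L1 - (B1-R1)*M1 = B2 - A2) ∧
    ((A1-R1)*L1^2 - (B1-R1)*M1^2 = B4 - A4) ∧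
    ((A1-R1)*(A2 + A1*L1) - (B1-R1)*(B2 + B1*M1) = B3 - A3) ∧
    ((B3 - A3) - (A1 - B1)*A2 - (B2 - A2)*A1 = -((A1-R1)*((B1-R1)*(L1-M1)))) ∧
    ((B2 - A2)^2 - (B4 - A4)*(A1 - B1) = (A1-R1)*((B1-R1)*(L1-M1)^2)) := by
  have hu : (A1 - R1) ≠ 0 := by
    intro h
    have e1 : R1 = A1 := by linear_combination -h
    have e2 : R2 = A2 := by linear_combination h1 - h4 + L1*h
    have e3 : R3 = A3 := by linear_combination h2 - h5 + L2*h
    have e4 : R4 = A4 := by linear_combination h3 - h6 + L1^2*h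
    exact hra e1 e2 e3 e4
  have hv : (B1 - R1) ≠ 0 := by
    intro h
    have e1 : R1 = B1 := by linear_combination -h
    have e2 : R2 = B2 := by linear_combination h10 - h7 + M1*h
    have e3 : R3 = B3 := by linear_combination h11 - h8 + M2*h
    have e4 : R4 = B4 := by linear_combination h12 - h9 + M1^2*h
    exact hrb e1 e2 e3 e4
  have ht : (L1 - M1) ≠ 0 := by
    intro h
    have e1 : L1 = M1 := by linear_combination h
    have e2 : L2 = M2 := by linear_combination h4 - h7 + R1*h
    have e3 : L3 = M3 := by linear_combination h5 - h8 + R1*e2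
    have e4 : L4 = M4 := by linear_combination h6 - h9 + R1*(L1+M1)*h
    exact hlm e1 e2 e3 e4
  have c4 : (A1-R1)*L1 - (B1-R1)*M1 = B2 - A2 := by linear_combination h4 - h1 + h10 - h7
  have c5 : (A1-R1)*L1^2 - (B1-R1)*M1^2 = B4 - A4 := by linear_combination h6 - h3 + h12 - h9
  have hb : (A1-R1)*(A2 + A1*L1) - (B1-R1)*(B2 + B1*M1) = B3 - A3 := by
    linear_combination h5 - h2 + h11 - h8 - (A1-R1)*h1 + (B1-R1)*h10
  have c6 : (B3 - A3) - (A1 - B1)*A2 - (B2 - A2)*A1 = -((A1-R1)*((B1-R1)*(L1-M1))) := by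
    linear_combination (A1 + B1 - R1)*c4 - hb
  have c7 : (B2 - A2)^2 - (B4 - A4)*(A1 - B1) = (A1-R1)*((B1-R1)*(L1-M1)^2) := by
    rw [← c4, ← c5]; ring
  exact ⟨hu, hv, ht, c4, c5, hb, c6, c7⟩



/-- Line-line path facts. Endpoint lines A,B; points X (on A and W), Y (on W and B); middle line W. -/
lemma ln_path (A1 A2 A3 A4 B1 B2 B3 B4 X1 X2 X3 X4 Y1 Y2 Y3 Y4 W1 W2 W3 W4 : F)
    (h1 : A2 = X2 + X1*A1) (h2 : A3 = X3 + X1*A2) (h3 : A4 = X4 + X1*A1^2)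
    (h4 : W2 = X2 + X1*W1) (h5 : W3 = X3 + X1*W2) (h6 : W4 = X4 + X1*W1^2)
    (h7 : W2 = Y2 + Y1*W1) (h8 : W3 = Y3 + Y1*W2) (h9 : W4 = Y4 + Y1*W1^2)
    (h10 : B2 = Y2 + Y1*B1) (h11 : B3 = Y3 + Y1*B2) (h12 : B4 = Y4 + Y1*B1^2)
    (hwa : W1 = A1 → W2 = A2 → W3 = A3 → W4 = A4 → False)
    (hwb : W1 = B1 → W2 = B2 → W3 = B3 → W4 = B4 → False)
    (hxy : X1 = Y1 → X2 = Y2 → X3 = Y3 → X4 = Y4 → False) :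
    (W1 - A1) ≠ 0 ∧ (W1 - B1) ≠ 0 ∧ (Y1 - X1) ≠ 0 ∧
    (A2 - B2 = Y1*(W1-B1) - X1*(W1-A1)) ∧
    (A3 - B3 = Y1^2*(W1-B1) - X1^2*(W1-A1)) ∧
    (A4 - B4 = Y1*(W1^2-B1^2) - X1*(W1^2-A1^2)) ∧
    ((A4 - B4) - (A1 + B1)*(A2 - B2) = (W1-A1)*((W1-B1)*(Y1-X1))) ∧
    ((A2 - B2)^2 - (A1 - B1)*(A3 - B3) = (W1-A1)*((W1-B1)*(Y1-X1)^2)) := by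
  have hs2 : W2 - A2 = X1*(W1 - A1) := by linear_combination h4 - h1
  have ht2 : W2 - B2 = Y1*(W1 - B1) := by linear_combination h7 - h10
  have hs : (W1 - A1) ≠ 0 := by
    intro h
    have e1 : W1 = A1 := by linear_combination h
    have e2 : W2 = A2 := by linear_combination hs2 + X1*h
    have e3 : W3 = A3 := by linear_combination h5 - h2 + X1*e2
    have e4 : W4 = A4 := by linear_combination h6 - h3 + X1*(W1+A1)*h
    exact hwa e1 e2 e3 e4
  have ht : (W1 - B1) ≠ 0 := by
    intro h
    have e1 : W1 = B1 := by linear_combination h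
    have e2 : W2 = B2 := by linear_combination ht2 + Y1*h
    have e3 : W3 = B3 := by linear_combination h8 - h11 + Y1*e2
    have e4 : W4 = B4 := by linear_combination h9 - h12 + Y1*(W1+B1)*h
    exact hwb e1 e2 e3 e4
  have hyx : (Y1 - X1) ≠ 0 := by
    intro h
    have e1 : X1 = Y1 := by linear_combination -h
    have e2 : X2 = Y2 := by linear_combination h7 - h4 - W1*e1
    have e3 : X3 = Y3 := by linear_combination h8 - h5 - W2*e1
    have e4 : X4 = Y4 := by linear_combination h9 - h6 - W1^2*e1
    exact hxy e1 e2 e3 e4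
  have d4 : A2 - B2 = Y1*(W1-B1) - X1*(W1-A1) := by linear_combination h1 - h10 - h4 + h7
  have d4' : A3 - B3 = Y1^2*(W1-B1) - X1^2*(W1-A1) := by
    linear_combination h2 - h11 - h5 + h8 + Y1*ht2 - X1*hs2
  have d5 : A4 - B4 = Y1*(W1^2-B1^2) - X1*(W1^2-A1^2) := by linear_combination h3 - h12 - h6 + h9
  have d6 : (A4 - B4) - (A1 + B1)*(A2 - B2) = (W1-A1)*((W1-B1)*(Y1-X1)) := by
    rw [d4, d5]; ring
  have d7 : (A2 - B2)^2 - (A1 - B1)*(A3 - B3) = (W1-A1)*((W1-B1)*(Y1-X1)^2) := by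
    rw [d4, d4']; ring
  exact ⟨hs, ht, hyx, d4, d4', d5, d6, d7⟩



set_option maxHeartbeats 1000000 in
/-- Two point-point paths with the same middle first coordinate have the same middle point. -/
lemma pt_same_r1 (h2F : (2:F) ≠ 0)
    (A1 A2 A3 A4 B1 B2 B3 B4 : F)
    (Ra1 Ra2 Ra3 Ra4 La1 La2 La3 La4 Ma1 Ma2 Ma3 Ma4 : F)
    (Rb1 Rb2 Rb3 Rb4 Lb1 Lb2 Lb3 Lb4 Mb1 Mb2 Mb3 Mb4 : F)
    (h1a : La2 = A2 + A1*La1) (h2a : La3 = A3 + A1*La2) (h3a : La4 = A4 + A1*La1^2)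
    (h4a : La2 = Ra2 + Ra1*La1) (h5a : La3 = Ra3 + Ra1*La2) (h6a : La4 = Ra4 + Ra1*La1^2)
    (h7a : Ma2 = Ra2 + Ra1*Ma1) (h8a : Ma3 = Ra3 + Ra1*Ma2) (h9a : Ma4 = Ra4 + Ra1*Ma1^2)
    (h10a : Ma2 = B2 + B1*Ma1) (h11a : Ma3 = B3 + B1*Ma2) (h12a : Ma4 = B4 + B1*Ma1^2)
    (h1b : Lb2 = A2 + A1*Lb1) (h2b : Lb3 = A3 + A1*Lb2) (h3b : Lb4 = A4 + A1*Lb1^2)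
    (h4b : Lb2 = Rb2 + Rb1*Lb1) (h5b : Lb3 = Rb3 + Rb1*Lb2) (h6b : Lb4 = Rb4 + Rb1*Lb1^2)
    (h7b : Mb2 = Rb2 + Rb1*Mb1) (h8b : Mb3 = Rb3 + Rb1*Mb2) (h9b : Mb4 = Rb4 + Rb1*Mb1^2)
    (h10b : Mb2 = B2 + B1*Mb1) (h11b : Mb3 = B3 + B1*Mb2) (h12b : Mb4 = B4 + B1*Mb1^2)
    (hu : A1 - Ra1 ≠ 0) (hv : B1 - Ra1 ≠ 0) (hta : La1 - Ma1 ≠ 0)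
    (c4a : (A1-Ra1)*La1 - (B1-Ra1)*Ma1 = B2 - A2)
    (c5a : (A1-Ra1)*La1^2 - (B1-Ra1)*Ma1^2 = B4 - A4)
    (hba : (A1-Ra1)*(A2 + A1*La1) - (B1-Ra1)*(B2 + B1*Ma1) = B3 - A3)
    (c4b : (A1-Rb1)*Lb1 - (B1-Rb1)*Mb1 = B2 - A2)
    (c5b : (A1-Rb1)*Lb1^2 - (B1-Rb1)*Mb1^2 = B4 - A4)
    (hbb : (A1-Rb1)*(A2 + A1*Lb1) - (B1-Rb1)*(B2 + B1*Mb1) = B3 - A3)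
    (hR : Ra1 = Rb1) :
    Ra2 = Rb2 ∧ Ra3 = Rb3 ∧ Ra4 = Rb4 := by
  subst hR
  have key : La1 = Lb1 ∧ Ma1 = Mb1 := by
    by_cases hd : A1 - B1 = 0
    · -- equal first coordinates of the endpoints
      have ea : (A1-Ra1)*(La1-Ma1) = B2 - A2 := by linear_combination c4a - Ma1*hd
      have eb : (A1-Ra1)*(Lb1-Mb1) = B2 - A2 := by linear_combination c4b - Mb1*hd
      have htt : La1 - Ma1 = Lb1 - Mb1 := by
        apply mul_left_cancel₀ hu
        linear_combination ea - eb
      have fa : (A1-Ra1)*(La1^2-Ma1^2) = B4 - A4 := by linear_combination c5a - Ma1^2*hd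
      have fb : (A1-Ra1)*(Lb1^2-Mb1^2) = B4 - A4 := by linear_combination c5b - Mb1^2*hd
      have hsum : La1 + Ma1 = Lb1 + Mb1 := by
        have hne : (A1-Ra1)*(La1-Ma1) ≠ 0 := mul_ne_zero hu hta
        apply mul_left_cancel₀ hne
        linear_combination fa - fb - ((A1-Ra1)*(Lb1+Mb1))*htt
      have hL : La1 = Lb1 := by
        apply mul_left_cancel₀ h2F
        linear_combination hsum + htt
      exact ⟨hL, by linear_combination hsum - hL⟩
    · -- distinct first coordinates of the endpoints
      have p1 : (A1-Ra1)*(La1-Lb1) = (B1-Ra1)*(Ma1-Mb1) := by linear_combination c4a - c4b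
      have p2 : (A1-Ra1)*(A1*(La1-Lb1)) = (B1-Ra1)*(B1*(Ma1-Mb1)) := by
        linear_combination hba - hbb
      have q : (B1-Ra1)*((A1-B1)*(Ma1-Mb1)) = 0 := by linear_combination p2 - A1*p1
      have hM : Ma1 - Mb1 = 0 := by
        have := (mul_eq_zero.mp q).resolve_left hv
        exact (mul_eq_zero.mp this).resolve_left hd
      have hL : La1 - Lb1 = 0 := by
        have : (A1-Ra1)*(La1-Lb1) = 0 := by linear_combination p1 + (B1-Ra1)*hM
        exact (mul_eq_zero.mp this).resolve_left hu
      constructor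
      · linear_combination hL
      · linear_combination hM
  obtain ⟨kL, kM⟩ := key
  have hL2 : La2 = Lb2 := by linear_combination h1a - h1b + A1*kL
  have hL3 : La3 = Lb3 := by linear_combination h2a - h2b + A1*hL2
  have hL4 : La4 = Lb4 := by linear_combination h3a - h3b + A1*(La1+Lb1)*kL
  refine ⟨?_, ?_, ?_⟩
  · linear_combination h4b - h4a + hL2 - Ra1*kL
  · linear_combination h5b - h5a + hL3 - Ra1*hL2
  · linear_combination h6b - h6a + hL4 - Ra1*(La1+Lb1)*kL

end Algebra
section Algebra2
variable {F : Type*} [Field F]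

/-- `Inc p l`: the point `p` is incident with the line `l`. -/
def Inc (p l : F × F × F × F) : Prop :=
  l.2.1 = p.2.1 + p.1 * l.1 ∧ l.2.2.1 = p.2.2.1 + p.1 * l.2.1 ∧
    l.2.2.2 = p.2.2.2 + p.1 * l.1 ^ 2

set_option maxHeartbeats 1000000 in
/-- No three internally disjoint point-line-point-line-point paths between two points. -/
lemma no_three_pt (h2F : (2:F) ≠ 0) (a b ra rb rc la ma lb mb lc mc : F × F × F × F)
    (hala : Inc a la) (hrala : Inc ra la) (hrama : Inc ra ma) (hbma : Inc b ma)
    (halb : Inc a lb) (hrblb : Inc rb lb) (hrbmb : Inc rb mb) (hbmb : Inc b mb)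
    (halc : Inc a lc) (hrclc : Inc rc lc) (hrcmc : Inc rc mc) (hbmc : Inc b mc)
    (hra : ra ≠ a) (hrb2 : ra ≠ b) (hlma : la ≠ ma)
    (hrb : rb ≠ a) (hrbb : rb ≠ b) (hlmb : lb ≠ mb)
    (hrc : rc ≠ a) (hrcb : rc ≠ b) (hlmc : lc ≠ mc)
    (hab : ra ≠ rb) (hac : ra ≠ rc) (hbc : rb ≠ rc) : False := by
  obtain ⟨A1, A2, A3, A4⟩ := a
  obtain ⟨B1, B2, B3, B4⟩ := b
  obtain ⟨Ra1, Ra2, Ra3, Ra4⟩ := ra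
  obtain ⟨Rb1, Rb2, Rb3, Rb4⟩ := rb
  obtain ⟨Rc1, Rc2, Rc3, Rc4⟩ := rc
  obtain ⟨La1, La2, La3, La4⟩ := la
  obtain ⟨Ma1, Ma2, Ma3, Ma4⟩ := ma
  obtain ⟨Lb1, Lb2, Lb3, Lb4⟩ := lb
  obtain ⟨Mb1, Mb2, Mb3, Mb4⟩ := mb
  obtain ⟨Lc1, Lc2, Lc3, Lc4⟩ := lc
  obtain ⟨Mc1, Mc2, Mc3, Mc4⟩ := mc
  obtain ⟨h1a, h2a, h3a⟩ := hala
  obtain ⟨h4a, h5a, h6a⟩ := hrala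
  obtain ⟨h7a, h8a, h9a⟩ := hrama
  obtain ⟨h10a, h11a, h12a⟩ := hbma
  obtain ⟨h1b, h2b, h3b⟩ := halb
  obtain ⟨h4b, h5b, h6b⟩ := hrblb
  obtain ⟨h7b, h8b, h9b⟩ := hrbmb
  obtain ⟨h10b, h11b, h12b⟩ := hbmb
  obtain ⟨h1c, h2c, h3c⟩ := halc
  obtain ⟨h4c, h5c, h6c⟩ := hrclc
  obtain ⟨h7c, h8c, h9c⟩ := hrcmc
  obtain ⟨h10c, h11c, h12c⟩ := hbmc
  obtain ⟨hua, hva, hta, c4a, c5a, hba, c6a, c7a⟩ :=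
    pt_path A1 A2 A3 A4 B1 B2 B3 B4 Ra1 Ra2 Ra3 Ra4 La1 La2 La3 La4 Ma1 Ma2 Ma3 Ma4
      h1a h2a h3a h4a h5a h6a h7a h8a h9a h10a h11a h12a
      (fun e1 e2 e3 e4 => hra (by rw [e1, e2, e3, e4]))
      (fun e1 e2 e3 e4 => hrb2 (by rw [e1, e2, e3, e4]))
      (fun e1 e2 e3 e4 => hlma (by rw [e1, e2, e3, e4]))
  obtain ⟨hub, hvb, htb, c4b, c5b, hbb, c6b, c7b⟩ :=
    pt_path A1 A2 A3 A4 B1 B2 B3 B4 Rb1 Rb2 Rb3 Rb4 Lb1 Lb2 Lb3 Lb4 Mb1 Mb2 Mb3 Mb4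
      h1b h2b h3b h4b h5b h6b h7b h8b h9b h10b h11b h12b
      (fun e1 e2 e3 e4 => hrb (by rw [e1, e2, e3, e4]))
      (fun e1 e2 e3 e4 => hrbb (by rw [e1, e2, e3, e4]))
      (fun e1 e2 e3 e4 => hlmb (by rw [e1, e2, e3, e4]))
  obtain ⟨huc, hvc, htc, c4c, c5c, hbc', c6c, c7c⟩ :=
    pt_path A1 A2 A3 A4 B1 B2 B3 B4 Rc1 Rc2 Rc3 Rc4 Lc1 Lc2 Lc3 Lc4 Mc1 Mc2 Mc3 Mc4
      h1c h2c h3c h4c h5c h6c h7c h8c h9c h10c h11c h12c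
      (fun e1 e2 e3 e4 => hrc (by rw [e1, e2, e3, e4]))
      (fun e1 e2 e3 e4 => hrcb (by rw [e1, e2, e3, e4]))
      (fun e1 e2 e3 e4 => hlmc (by rw [e1, e2, e3, e4]))
  -- first coordinates of the middles are pairwise distinct
  have hRab : Ra1 ≠ Rb1 := by
    intro h
    obtain ⟨e2, e3, e4⟩ := pt_same_r1 h2F A1 A2 A3 A4 B1 B2 B3 B4
      Ra1 Ra2 Ra3 Ra4 La1 La2 La3 La4 Ma1 Ma2 Ma3 Ma4
      Rb1 Rb2 Rb3 Rb4 Lb1 Lb2 Lb3 Lb4 Mb1 Mb2 Mb3 Mb4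
      h1a h2a h3a h4a h5a h6a h7a h8a h9a h10a h11a h12a
      h1b h2b h3b h4b h5b h6b h7b h8b h9b h10b h11b h12b
      hua hva hta c4a c5a hba c4b c5b hbb h
    exact hab (by rw [h, e2, e3, e4])
  have hRac : Ra1 ≠ Rc1 := by
    intro h
    obtain ⟨e2, e3, e4⟩ := pt_same_r1 h2F A1 A2 A3 A4 B1 B2 B3 B4
      Ra1 Ra2 Ra3 Ra4 La1 La2 La3 La4 Ma1 Ma2 Ma3 Ma4
      Rc1 Rc2 Rc3 Rc4 Lc1 Lc2 Lc3 Lc4 Mc1 Mc2 Mc3 Mc4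
      h1a h2a h3a h4a h5a h6a h7a h8a h9a h10a h11a h12a
      h1c h2c h3c h4c h5c h6c h7c h8c h9c h10c h11c h12c
      hua hva hta c4a c5a hba c4c c5c hbc' h
    exact hac (by rw [h, e2, e3, e4])
  have hRbc : Rb1 ≠ Rc1 := by
    intro h
    obtain ⟨e2, e3, e4⟩ := pt_same_r1 h2F A1 A2 A3 A4 B1 B2 B3 B4
      Rb1 Rb2 Rb3 Rb4 Lb1 Lb2 Lb3 Lb4 Mb1 Mb2 Mb3 Mb4
      Rc1 Rc2 Rc3 Rc4 Lc1 Lc2 Lc3 Lc4 Mc1 Mc2 Mc3 Mc4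
      h1b h2b h3b h4b h5b h6b h7b h8b h9b h10b h11b h12b
      h1c h2c h3c h4c h5c h6c h7c h8c h9c h10c h11c h12c
      hub hvb htb c4b c5b hbb c4c c5c hbc' h
    exact hbc (by rw [h, e2, e3, e4])
  -- the products (A1-R1)*(B1-R1) agree for the three paths
  have T1ab : (A1-Ra1)*((B1-Ra1)*(La1-Ma1)) = (A1-Rb1)*((B1-Rb1)*(Lb1-Mb1)) := by
    linear_combination c6a - c6b
  have T2ab : (A1-Ra1)*((B1-Ra1)*(La1-Ma1)^2) = (A1-Rb1)*((B1-Rb1)*(Lb1-Mb1)^2) := by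
    linear_combination c7b - c7a
  have T1ac : (A1-Ra1)*((B1-Ra1)*(La1-Ma1)) = (A1-Rc1)*((B1-Rc1)*(Lc1-Mc1)) := by
    linear_combination c6a - c6c
  have T2ac : (A1-Ra1)*((B1-Ra1)*(La1-Ma1)^2) = (A1-Rc1)*((B1-Rc1)*(Lc1-Mc1)^2) := by
    linear_combination c7c - c7a
  have hXb : (A1-Rb1)*((B1-Rb1)*(Lb1-Mb1)^2) ≠ 0 :=
    mul_ne_zero hub (mul_ne_zero hvb (pow_ne_zero 2 htb))
  have hXc : (A1-Rc1)*((B1-Rc1)*(Lc1-Mc1)^2) ≠ 0 :=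
    mul_ne_zero huc (mul_ne_zero hvc (pow_ne_zero 2 htc))
  have Eab : ((A1-Rb1)*((B1-Rb1)*(Lb1-Mb1)^2)) *
      ((A1-Ra1)*(B1-Ra1) - (A1-Rb1)*(B1-Rb1)) = 0 := by
    linear_combination ((A1-Ra1)*((B1-Ra1)*(La1-Ma1)) + (A1-Rb1)*((B1-Rb1)*(Lb1-Mb1)))*T1ab
      - ((A1-Ra1)*(B1-Ra1))*T2ab
  have Eac : ((A1-Rc1)*((B1-Rc1)*(Lc1-Mc1)^2)) *
      ((A1-Ra1)*(B1-Ra1) - (A1-Rc1)*(B1-Rc1)) = 0 := by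
    linear_combination ((A1-Ra1)*((B1-Ra1)*(La1-Ma1)) + (A1-Rc1)*((B1-Rc1)*(Lc1-Mc1)))*T1ac
      - ((A1-Ra1)*(B1-Ra1))*T2ac
  have huvab : (A1-Ra1)*(B1-Ra1) - (A1-Rb1)*(B1-Rb1) = 0 :=
    (mul_eq_zero.mp Eab).resolve_left hXb
  have huvac : (A1-Ra1)*(B1-Ra1) - (A1-Rc1)*(B1-Rc1) = 0 :=
    (mul_eq_zero.mp Eac).resolve_left hXc
  have s1 : (Ra1 - Rb1)*(Ra1 + Rb1 - (A1+B1)) = 0 := by linear_combination huvab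
  have s2 : (Ra1 - Rc1)*(Ra1 + Rc1 - (A1+B1)) = 0 := by linear_combination huvac
  have q1 : Ra1 + Rb1 - (A1+B1) = 0 :=
    (mul_eq_zero.mp s1).resolve_left (sub_ne_zero.mpr hRab)
  have q2 : Ra1 + Rc1 - (A1+B1) = 0 :=
    (mul_eq_zero.mp s2).resolve_left (sub_ne_zero.mpr hRac)
  exact hRbc (by linear_combination q1 - q2)

end Algebra2
section Algebra3
variable {F : Type*} [Field F]

set_option maxHeartbeats 1000000 in
/-- Two line-line paths with the same middle first coordinate have the same middle line. -/
lemma ln_same_w1 (h2F : (2:F) ≠ 0)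
    (A1 A2 A3 A4 B1 B2 B3 B4 : F)
    (Xa1 Xa2 Xa3 Xa4 Ya1 Ya2 Ya3 Ya4 Wa1 Wa2 Wa3 Wa4 : F)
    (Xb1 Xb2 Xb3 Xb4 Yb1 Yb2 Yb3 Yb4 Wb1 Wb2 Wb3 Wb4 : F)
    (h1a : A2 = Xa2 + Xa1*A1) (h2a : A3 = Xa3 + Xa1*A2) (h3a : A4 = Xa4 + Xa1*A1^2)
    (h4a : Wa2 = Xa2 + Xa1*Wa1) (h5a : Wa3 = Xa3 + Xa1*Wa2) (h6a : Wa4 = Xa4 + Xa1*Wa1^2)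
    (h1b : A2 = Xb2 + Xb1*A1) (h2b : A3 = Xb3 + Xb1*A2) (h3b : A4 = Xb4 + Xb1*A1^2)
    (h4b : Wb2 = Xb2 + Xb1*Wb1) (h5b : Wb3 = Xb3 + Xb1*Wb2) (h6b : Wb4 = Xb4 + Xb1*Wb1^2)
    (hs : Wa1 - A1 ≠ 0) (htB : Wa1 - B1 ≠ 0) (hxya : Ya1 - Xa1 ≠ 0)
    (d4a : A2 - B2 = Ya1*(Wa1-B1) - Xa1*(Wa1-A1))
    (d4'a : A3 - B3 = Ya1^2*(Wa1-B1) - Xa1^2*(Wa1-A1))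
    (d5a : A4 - B4 = Ya1*(Wa1^2-B1^2) - Xa1*(Wa1^2-A1^2))
    (d4b : A2 - B2 = Yb1*(Wb1-B1) - Xb1*(Wb1-A1))
    (d4'b : A3 - B3 = Yb1^2*(Wb1-B1) - Xb1^2*(Wb1-A1))
    (d5b : A4 - B4 = Yb1*(Wb1^2-B1^2) - Xb1*(Wb1^2-A1^2))
    (hW : Wa1 = Wb1) :
    Wa2 = Wb2 ∧ Wa3 = Wb3 ∧ Wa4 = Wb4 := by
  subst hW
  have E1 : (Ya1-Yb1)*(Wa1-B1) = (Xa1-Xb1)*(Wa1-A1) := by linear_combination d4b - d4a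
  have E2 : (Ya1-Yb1)*((Wa1-B1)*(Wa1+B1)) = (Xa1-Xb1)*((Wa1-A1)*(Wa1+A1)) := by
    linear_combination d5b - d5a
  have key : Xa1 = Xb1 ∧ Ya1 = Yb1 := by
    by_cases hd : A1 - B1 = 0
    · have hDD : Ya1 - Yb1 = Xa1 - Xb1 := by
        apply mul_right_cancel₀ hs
        linear_combination E1 - (Ya1-Yb1)*hd
      have E3 : (Ya1^2-Yb1^2)*(Wa1-B1) = (Xa1^2-Xb1^2)*(Wa1-A1) := by
        linear_combination d4'b - d4'a
      by_cases hD : Ya1 - Yb1 = 0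
      · have hX0 : Xa1 - Xb1 = 0 := by rw [← hDD]; exact hD
        exact ⟨sub_eq_zero.mp hX0, sub_eq_zero.mp hD⟩
      · exfalso
        have sq : Ya1^2-Yb1^2 = Xa1^2-Xb1^2 := by
          apply mul_right_cancel₀ hs
          linear_combination E3 - (Ya1^2-Yb1^2)*hd
        have hsum : (Ya1-Yb1)*(Ya1+Yb1) = (Ya1-Yb1)*(Xa1+Xb1) := by
          linear_combination sq - (Xa1+Xb1)*hDD
        have hsum' : Ya1 + Yb1 = Xa1 + Xb1 := mul_left_cancel₀ hD hsum
        have : Ya1 = Xa1 := by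
          apply mul_left_cancel₀ h2F
          linear_combination hsum' + hDD
        exact hxya (by linear_combination this)
    · have hd' : (Wa1-B1)*(B1-A1) ≠ 0 :=
        mul_ne_zero htB (fun h => hd (by linear_combination -h))
      have q : (Ya1-Yb1)*((Wa1-B1)*(B1-A1)) = 0 := by linear_combination E2 - (Wa1+A1)*E1
      have hY : Ya1 - Yb1 = 0 := by
        rcases mul_eq_zero.mp q with h | h
        · exact h
        · exact absurd h hd'
      have hX : Xa1 - Xb1 = 0 := by
        have hq : (Xa1-Xb1)*(Wa1-A1) = 0 := by linear_combination (Wa1-B1)*hY - E1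
        exact (mul_eq_zero.mp hq).resolve_right hs
      exact ⟨sub_eq_zero.mp hX, sub_eq_zero.mp hY⟩
  obtain ⟨kX, kY⟩ := key
  have W2 : Wa2 = Wb2 := by linear_combination h4a - h4b + h1b - h1a + (Wa1 - A1)*kX
  have W3 : Wa3 = Wb3 := by
    linear_combination h5a - h5b + h2b - h2a + (Wa2 - A2)*kX + Xb1*W2
  have W4 : Wa4 = Wb4 := by linear_combination h6a - h6b + h3b - h3a + (Wa1^2 - A1^2)*kX
  exact ⟨W2, W3, W4⟩

set_option maxHeartbeats 1000000 in
/-- No three internally disjoint line-point-line-point-line paths between two lines. -/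
lemma no_three_ln (h2F : (2:F) ≠ 0) (a b pa ra wa pb rb wb pc rc wc : F × F × F × F)
    (hpaa : Inc pa a) (hpawa : Inc pa wa) (hrawa : Inc ra wa) (hrab : Inc ra b)
    (hpab : Inc pb a) (hpbwb : Inc pb wb) (hrbwb : Inc rb wb) (hrbb : Inc rb b)
    (hpac : Inc pc a) (hpcwc : Inc pc wc) (hrcwc : Inc rc wc) (hrcb : Inc rc b)
    (hwaa : wa ≠ a) (hwab : wa ≠ b) (hpra : pa ≠ ra)
    (hwba : wb ≠ a) (hwbb : wb ≠ b) (hprb : pb ≠ rb)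
    (hwca : wc ≠ a) (hwcb : wc ≠ b) (hprc : pc ≠ rc)
    (hab : wa ≠ wb) (hac : wa ≠ wc) (hbc : wb ≠ wc) : False := by
  obtain ⟨A1, A2, A3, A4⟩ := a
  obtain ⟨B1, B2, B3, B4⟩ := b
  obtain ⟨Xa1, Xa2, Xa3, Xa4⟩ := pa
  obtain ⟨Ya1, Ya2, Ya3, Ya4⟩ := ra
  obtain ⟨Wa1, Wa2, Wa3, Wa4⟩ := wa
  obtain ⟨Xb1, Xb2, Xb3, Xb4⟩ := pb
  obtain ⟨Yb1, Yb2, Yb3, Yb4⟩ := rb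
  obtain ⟨Wb1, Wb2, Wb3, Wb4⟩ := wb
  obtain ⟨Xc1, Xc2, Xc3, Xc4⟩ := pc
  obtain ⟨Yc1, Yc2, Yc3, Yc4⟩ := rc
  obtain ⟨Wc1, Wc2, Wc3, Wc4⟩ := wc
  obtain ⟨h1a, h2a, h3a⟩ := hpaa
  obtain ⟨h4a, h5a, h6a⟩ := hpawa
  obtain ⟨h7a, h8a, h9a⟩ := hrawa
  obtain ⟨h10a, h11a, h12a⟩ := hrab
  obtain ⟨h1b, h2b, h3b⟩ := hpab
  obtain ⟨h4b, h5b, h6b⟩ := hpbwb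
  obtain ⟨h7b, h8b, h9b⟩ := hrbwb
  obtain ⟨h10b, h11b, h12b⟩ := hrbb
  obtain ⟨h1c, h2c, h3c⟩ := hpac
  obtain ⟨h4c, h5c, h6c⟩ := hpcwc
  obtain ⟨h7c, h8c, h9c⟩ := hrcwc
  obtain ⟨h10c, h11c, h12c⟩ := hrcb
  obtain ⟨hsa, hta, hyxa, d4a, d4'a, d5a, d6a, d7a⟩ :=
    ln_path A1 A2 A3 A4 B1 B2 B3 B4 Xa1 Xa2 Xa3 Xa4 Ya1 Ya2 Ya3 Ya4 Wa1 Wa2 Wa3 Wa4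
      h1a h2a h3a h4a h5a h6a h7a h8a h9a h10a h11a h12a
      (fun e1 e2 e3 e4 => hwaa (by rw [e1, e2, e3, e4]))
      (fun e1 e2 e3 e4 => hwab (by rw [e1, e2, e3, e4]))
      (fun e1 e2 e3 e4 => hpra (by rw [e1, e2, e3, e4]))
  obtain ⟨hsb, htb, hyxb, d4b, d4'b, d5b, d6b, d7b⟩ :=
    ln_path A1 A2 A3 A4 B1 B2 B3 B4 Xb1 Xb2 Xb3 Xb4 Yb1 Yb2 Yb3 Yb4 Wb1 Wb2 Wb3 Wb4
      h1b h2b h3b h4b h5b h6b h7b h8b h9b h10b h11b h12b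
      (fun e1 e2 e3 e4 => hwba (by rw [e1, e2, e3, e4]))
      (fun e1 e2 e3 e4 => hwbb (by rw [e1, e2, e3, e4]))
      (fun e1 e2 e3 e4 => hprb (by rw [e1, e2, e3, e4]))
  obtain ⟨hsc, htc, hyxc, d4c, d4'c, d5c, d6c, d7c⟩ :=
    ln_path A1 A2 A3 A4 B1 B2 B3 B4 Xc1 Xc2 Xc3 Xc4 Yc1 Yc2 Yc3 Yc4 Wc1 Wc2 Wc3 Wc4
      h1c h2c h3c h4c h5c h6c h7c h8c h9c h10c h11c h12c
      (fun e1 e2 e3 e4 => hwca (by rw [e1, e2, e3, e4]))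
      (fun e1 e2 e3 e4 => hwcb (by rw [e1, e2, e3, e4]))
      (fun e1 e2 e3 e4 => hprc (by rw [e1, e2, e3, e4]))
  have hWab : Wa1 ≠ Wb1 := by
    intro h
    obtain ⟨e2, e3, e4⟩ := ln_same_w1 h2F A1 A2 A3 A4 B1 B2 B3 B4
      Xa1 Xa2 Xa3 Xa4 Ya1 Ya2 Ya3 Ya4 Wa1 Wa2 Wa3 Wa4
      Xb1 Xb2 Xb3 Xb4 Yb1 Yb2 Yb3 Yb4 Wb1 Wb2 Wb3 Wb4
      h1a h2a h3a h4a h5a h6a h1b h2b h3b h4b h5b h6b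
      hsa hta hyxa d4a d4'a d5a d4b d4'b d5b h
    exact hab (by rw [h, e2, e3, e4])
  have hWac : Wa1 ≠ Wc1 := by
    intro h
    obtain ⟨e2, e3, e4⟩ := ln_same_w1 h2F A1 A2 A3 A4 B1 B2 B3 B4
      Xa1 Xa2 Xa3 Xa4 Ya1 Ya2 Ya3 Ya4 Wa1 Wa2 Wa3 Wa4
      Xc1 Xc2 Xc3 Xc4 Yc1 Yc2 Yc3 Yc4 Wc1 Wc2 Wc3 Wc4
      h1a h2a h3a h4a h5a h6a h1c h2c h3c h4c h5c h6c
      hsa hta hyxa d4a d4'a d5a d4c d4'c d5c h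
    exact hac (by rw [h, e2, e3, e4])
  have hWbc : Wb1 ≠ Wc1 := by
    intro h
    obtain ⟨e2, e3, e4⟩ := ln_same_w1 h2F A1 A2 A3 A4 B1 B2 B3 B4
      Xb1 Xb2 Xb3 Xb4 Yb1 Yb2 Yb3 Yb4 Wb1 Wb2 Wb3 Wb4
      Xc1 Xc2 Xc3 Xc4 Yc1 Yc2 Yc3 Yc4 Wc1 Wc2 Wc3 Wc4
      h1b h2b h3b h4b h5b h6b h1c h2c h3c h4c h5c h6c
      hsb htb hyxb d4b d4'b d5b d4c d4'c d5c h
    exact hbc (by rw [h, e2, e3, e4])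
  have T1ab : (Wa1-A1)*((Wa1-B1)*(Ya1-Xa1)) = (Wb1-A1)*((Wb1-B1)*(Yb1-Xb1)) := by
    linear_combination d6b - d6a
  have T2ab : (Wa1-A1)*((Wa1-B1)*(Ya1-Xa1)^2) = (Wb1-A1)*((Wb1-B1)*(Yb1-Xb1)^2) := by
    linear_combination d7b - d7a
  have T1ac : (Wa1-A1)*((Wa1-B1)*(Ya1-Xa1)) = (Wc1-A1)*((Wc1-B1)*(Yc1-Xc1)) := by
    linear_combination d6c - d6a
  have T2ac : (Wa1-A1)*((Wa1-B1)*(Ya1-Xa1)^2) = (Wc1-A1)*((Wc1-B1)*(Yc1-Xc1)^2) := by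
    linear_combination d7c - d7a
  have hXb : (Wb1-A1)*((Wb1-B1)*(Yb1-Xb1)^2) ≠ 0 :=
    mul_ne_zero hsb (mul_ne_zero htb (pow_ne_zero 2 hyxb))
  have hXc : (Wc1-A1)*((Wc1-B1)*(Yc1-Xc1)^2) ≠ 0 :=
    mul_ne_zero hsc (mul_ne_zero htc (pow_ne_zero 2 hyxc))
  have Eab : ((Wb1-A1)*((Wb1-B1)*(Yb1-Xb1)^2)) *
      ((Wa1-A1)*(Wa1-B1) - (Wb1-A1)*(Wb1-B1)) = 0 := by
    linear_combination ((Wa1-A1)*((Wa1-B1)*(Ya1-Xa1)) + (Wb1-A1)*((Wb1-B1)*(Yb1-Xb1)))*T1ab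
      - ((Wa1-A1)*(Wa1-B1))*T2ab
  have Eac : ((Wc1-A1)*((Wc1-B1)*(Yc1-Xc1)^2)) *
      ((Wa1-A1)*(Wa1-B1) - (Wc1-A1)*(Wc1-B1)) = 0 := by
    linear_combination ((Wa1-A1)*((Wa1-B1)*(Ya1-Xa1)) + (Wc1-A1)*((Wc1-B1)*(Yc1-Xc1)))*T1ac
      - ((Wa1-A1)*(Wa1-B1))*T2ac
  have huvab : (Wa1-A1)*(Wa1-B1) - (Wb1-A1)*(Wb1-B1) = 0 :=
    (mul_eq_zero.mp Eab).resolve_left hXb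
  have huvac : (Wa1-A1)*(Wa1-B1) - (Wc1-A1)*(Wc1-B1) = 0 :=
    (mul_eq_zero.mp Eac).resolve_left hXc
  have s1 : (Wa1 - Wb1)*(Wa1 + Wb1 - (A1+B1)) = 0 := by linear_combination huvab
  have s2 : (Wa1 - Wc1)*(Wa1 + Wc1 - (A1+B1)) = 0 := by linear_combination huvac
  have q1 : Wa1 + Wb1 - (A1+B1) = 0 :=
    (mul_eq_zero.mp s1).resolve_left (sub_ne_zero.mpr hWab)
  have q2 : Wa1 + Wc1 - (A1+B1) = 0 :=
    (mul_eq_zero.mp s2).resolve_left (sub_ne_zero.mpr hWac)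
  exact hWbc (by linear_combination q1 - q2)

end Algebra3

section Graph
variable (F : Type*) [Field F]

/-- The bipartite point/line incidence graph. -/
def VWGraph : SimpleGraph ((F × F × F × F) ⊕ (F × F × F × F)) where
  Adj x y := match x, y with
    | Sum.inl p, Sum.inr l => Inc p l
    | Sum.inr l, Sum.inl p => Inc p l
    | _, _ => False
  symm := ⟨by rintro (p | l) (q | m) h <;> exact h⟩
  loopless := ⟨by rintro (p | l) h <;> exact h⟩

variable {F}

lemma vw_adj_inl {p : F × F × F × F} {w} (h : (VWGraph F).Adj (Sum.inl p) w) :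
    ∃ l, w = Sum.inr l ∧ Inc p l := by
  cases w with
  | inl q => exact h.elim
  | inr l => exact ⟨l, rfl, h⟩

lemma vw_adj_inr {l : F × F × F × F} {w} (h : (VWGraph F).Adj (Sum.inr l) w) :
    ∃ p, w = Sum.inl p ∧ Inc p l := by
  cases w with
  | inl p => exact ⟨p, rfl, h⟩
  | inr m => exact h.elim

end Graph

section Theta

lemma theta_adj_A (i : Fin 3) : thetaFourThree.Adj (Sum.inl 0) (Sum.inr (i, 0)) := by
  rw [thetaFourThree, SimpleGraph.fromRel_adj]
  exact ⟨by simp, Or.inl (Or.inl ⟨rfl, rfl⟩)⟩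

lemma theta_adj_B (i : Fin 3) : thetaFourThree.Adj (Sum.inr (i, 0)) (Sum.inr (i, 1)) := by
  rw [thetaFourThree, SimpleGraph.fromRel_adj]
  refine ⟨by simp, Or.inl ⟨rfl, ?_, ?_⟩⟩ <;> simp

lemma theta_adj_C (i : Fin 3) : thetaFourThree.Adj (Sum.inr (i, 1)) (Sum.inr (i, 2)) := by
  rw [thetaFourThree, SimpleGraph.fromRel_adj]
  refine ⟨by simp, Or.inl ⟨rfl, ?_, ?_⟩⟩ <;> simp

lemma theta_adj_D (i : Fin 3) : thetaFourThree.Adj (Sum.inr (i, 2)) (Sum.inl 1) := by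
  rw [thetaFourThree, SimpleGraph.fromRel_adj]
  exact ⟨by simp, Or.inr (Or.inr ⟨rfl, rfl⟩)⟩

lemma theta_no_isolated (u : Fin 2 ⊕ Fin 3 × Fin 3) : ∃ v, thetaFourThree.Adj u v := by
  rcases u with a | ⟨i, j⟩
  · fin_cases a
    · exact ⟨_, theta_adj_A 0⟩
    · exact ⟨_, (theta_adj_D 0).symm⟩
  · fin_cases j
    · exact ⟨_, theta_adj_B i⟩
    · exact ⟨_, theta_adj_C i⟩
    · exact ⟨_, theta_adj_D i⟩

end Theta

section Free
variable {F : Type*} [Field F]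

/-- The incidence graph contains no copy of the theta graph. -/
theorem vw_free (h2F : (2:F) ≠ 0) : ¬ ContainsCopy (VWGraph F) thetaFourThree := by
  rintro ⟨f, hinj, hedge⟩
  have fne : ∀ {u v : Fin 2 ⊕ Fin 3 × Fin 3}, u ≠ v → f u ≠ f v :=
    fun h1 h2 => h1 (hinj h2)
  have hA : ∀ i, (VWGraph F).Adj (f (Sum.inl 0)) (f (Sum.inr (i, 0))) :=
    fun i => hedge _ _ (theta_adj_A i)
  have hB : ∀ i, (VWGraph F).Adj (f (Sum.inr (i, 0))) (f (Sum.inr (i, 1))) :=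
    fun i => hedge _ _ (theta_adj_B i)
  have hC : ∀ i, (VWGraph F).Adj (f (Sum.inr (i, 1))) (f (Sum.inr (i, 2))) :=
    fun i => hedge _ _ (theta_adj_C i)
  have hD : ∀ i, (VWGraph F).Adj (f (Sum.inr (i, 2))) (f (Sum.inl 1)) :=
    fun i => hedge _ _ (theta_adj_D i)
  rcases hfa : f (Sum.inl 0) with a | a
  · -- Case 1: the endpoints are points
    have step : ∀ i : Fin 3, ∃ l r m, f (Sum.inr (i,0)) = Sum.inr l ∧
        f (Sum.inr (i,1)) = Sum.inl r ∧ f (Sum.inr (i,2)) = Sum.inr m ∧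
        Inc a l ∧ Inc r l ∧ Inc r m := by
      intro i
      have h1 := hA i; rw [hfa] at h1
      obtain ⟨l, hl, hal⟩ := vw_adj_inl h1
      have h2 := hB i; rw [hl] at h2
      obtain ⟨r, hr, hrl⟩ := vw_adj_inr h2
      have h3 := hC i; rw [hr] at h3
      obtain ⟨m, hm, hrm⟩ := vw_adj_inl h3
      exact ⟨l, r, m, hl, hr, hm, hal, hrl, hrm⟩
    obtain ⟨la, ra, ma, hla, hra, hma, hala, hrala, hrama⟩ := step 0
    obtain ⟨lb, rb, mb, hlb, hrb, hmb, halb, hrblb, hrbmb⟩ := step 1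
    obtain ⟨lc, rc, mc, hlc, hrc, hmc, halc, hrclc, hrcmc⟩ := step 2
    have h4 := hD 0; rw [hma] at h4
    obtain ⟨b, hb, hbma⟩ := vw_adj_inr h4
    have h4b := hD 1; rw [hmb, hb] at h4b
    have h4c := hD 2; rw [hmc, hb] at h4c
    refine no_three_pt h2F a b ra rb rc la ma lb mb lc mc hala hrala hrama hbma
      halb hrblb hrbmb h4b halc hrclc hrcmc h4c ?_ ?_ ?_ ?_ ?_ ?_ ?_ ?_ ?_ ?_ ?_ ?_
    · intro h
      exact fne (show (Sum.inr (0,1) : Fin 2 ⊕ Fin 3 × Fin 3) ≠ Sum.inl 0 by decide)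
        (by rw [hra, hfa, h])
    · intro h
      exact fne (show (Sum.inr (0,1) : Fin 2 ⊕ Fin 3 × Fin 3) ≠ Sum.inl 1 by decide)
        (by rw [hra, hb, h])
    · intro h
      exact fne (show (Sum.inr (0,0) : Fin 2 ⊕ Fin 3 × Fin 3) ≠ Sum.inr (0,2) by decide)
        (by rw [hla, hma, h])
    · intro h
      exact fne (show (Sum.inr (1,1) : Fin 2 ⊕ Fin 3 × Fin 3) ≠ Sum.inl 0 by decide)
        (by rw [hrb, hfa, h])
    · intro h
      exact fne (show (Sum.inr (1,1) : Fin 2 ⊕ Fin 3 × Fin 3) ≠ Sum.inl 1 by decide)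
        (by rw [hrb, hb, h])
    · intro h
      exact fne (show (Sum.inr (1,0) : Fin 2 ⊕ Fin 3 × Fin 3) ≠ Sum.inr (1,2) by decide)
        (by rw [hlb, hmb, h])
    · intro h
      exact fne (show (Sum.inr (2,1) : Fin 2 ⊕ Fin 3 × Fin 3) ≠ Sum.inl 0 by decide)
        (by rw [hrc, hfa, h])
    · intro h
      exact fne (show (Sum.inr (2,1) : Fin 2 ⊕ Fin 3 × Fin 3) ≠ Sum.inl 1 by decide)
        (by rw [hrc, hb, h])
    · intro h
      exact fne (show (Sum.inr (2,0) : Fin 2 ⊕ Fin 3 × Fin 3) ≠ Sum.inr (2,2) by decide)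
        (by rw [hlc, hmc, h])
    · intro h
      exact fne (show (Sum.inr (0,1) : Fin 2 ⊕ Fin 3 × Fin 3) ≠ Sum.inr (1,1) by decide)
        (by rw [hra, hrb, h])
    · intro h
      exact fne (show (Sum.inr (0,1) : Fin 2 ⊕ Fin 3 × Fin 3) ≠ Sum.inr (2,1) by decide)
        (by rw [hra, hrc, h])
    · intro h
      exact fne (show (Sum.inr (1,1) : Fin 2 ⊕ Fin 3 × Fin 3) ≠ Sum.inr (2,1) by decide)
        (by rw [hrb, hrc, h])
  · -- Case 2: the endpoints are lines
    have step : ∀ i : Fin 3, ∃ p w r, f (Sum.inr (i,0)) = Sum.inl p ∧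
        f (Sum.inr (i,1)) = Sum.inr w ∧ f (Sum.inr (i,2)) = Sum.inl r ∧
        Inc p a ∧ Inc p w ∧ Inc r w := by
      intro i
      have h1 := hA i; rw [hfa] at h1
      obtain ⟨p, hp, hpa⟩ := vw_adj_inr h1
      have h2 := hB i; rw [hp] at h2
      obtain ⟨w, hw, hpw⟩ := vw_adj_inl h2
      have h3 := hC i; rw [hw] at h3
      obtain ⟨r, hr, hrw⟩ := vw_adj_inr h3
      exact ⟨p, w, r, hp, hw, hr, hpa, hpw, hrw⟩
    obtain ⟨pa, wa, ra, hpa', hwa, hra, hpaa, hpawa, hrawa⟩ := step 0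
    obtain ⟨pb, wb, rb, hpb', hwb, hrb, hpab, hpbwb, hrbwb⟩ := step 1
    obtain ⟨pc, wc, rc, hpc', hwc, hrc, hpac, hpcwc, hrcwc⟩ := step 2
    have h4 := hD 0; rw [hra] at h4
    obtain ⟨b, hb, hrab'⟩ := vw_adj_inl h4
    have hrab : Inc ra b := by
      have := hD 0; rw [hra, hb] at this; exact this
    have h4b := hD 1; rw [hrb, hb] at h4b
    have h4c := hD 2; rw [hrc, hb] at h4c
    refine no_three_ln h2F a b pa ra wa pb rb wb pc rc wc hpaa hpawa hrawa hrab
      hpab hpbwb hrbwb h4b hpac hpcwc hrcwc h4c ?_ ?_ ?_ ?_ ?_ ?_ ?_ ?_ ?_ ?_ ?_ ?_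
    · intro h
      exact fne (show (Sum.inr (0,1) : Fin 2 ⊕ Fin 3 × Fin 3) ≠ Sum.inl 0 by decide)
        (by rw [hwa, hfa, h])
    · intro h
      exact fne (show (Sum.inr (0,1) : Fin 2 ⊕ Fin 3 × Fin 3) ≠ Sum.inl 1 by decide)
        (by rw [hwa, hb, h])
    · intro h
      exact fne (show (Sum.inr (0,0) : Fin 2 ⊕ Fin 3 × Fin 3) ≠ Sum.inr (0,2) by decide)
        (by rw [hpa', hra, h])
    · intro h
      exact fne (show (Sum.inr (1,1) : Fin 2 ⊕ Fin 3 × Fin 3) ≠ Sum.inl 0 by decide)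
        (by rw [hwb, hfa, h])
    · intro h
      exact fne (show (Sum.inr (1,1) : Fin 2 ⊕ Fin 3 × Fin 3) ≠ Sum.inl 1 by decide)
        (by rw [hwb, hb, h])
    · intro h
      exact fne (show (Sum.inr (1,0) : Fin 2 ⊕ Fin 3 × Fin 3) ≠ Sum.inr (1,2) by decide)
        (by rw [hpb', hrb, h])
    · intro h
      exact fne (show (Sum.inr (2,1) : Fin 2 ⊕ Fin 3 × Fin 3) ≠ Sum.inl 0 by decide)
        (by rw [hwc, hfa, h])
    · intro h
      exact fne (show (Sum.inr (2,1) : Fin 2 ⊕ Fin 3 × Fin 3) ≠ Sum.inl 1 by decide)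
        (by rw [hwc, hb, h])
    · intro h
      exact fne (show (Sum.inr (2,0) : Fin 2 ⊕ Fin 3 × Fin 3) ≠ Sum.inr (2,2) by decide)
        (by rw [hpc', hrc, h])
    · intro h
      exact fne (show (Sum.inr (0,1) : Fin 2 ⊕ Fin 3 × Fin 3) ≠ Sum.inr (1,1) by decide)
        (by rw [hwa, hwb, h])
    · intro h
      exact fne (show (Sum.inr (0,1) : Fin 2 ⊕ Fin 3 × Fin 3) ≠ Sum.inr (2,1) by decide)
        (by rw [hwa, hwc, h])
    · intro h
      exact fne (show (Sum.inr (1,1) : Fin 2 ⊕ Fin 3 × Fin 3) ≠ Sum.inr (2,1) by decide)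
        (by rw [hwb, hwc, h])

end Free
section Count
variable {F : Type*} [Field F] [Fintype F]
set_option linter.unusedSectionVars false

/-- The line through the point `a` with first coordinate `t`. -/
def lineThrough (a : F × F × F × F) (t : F) : F × F × F × F :=
  (t, a.2.1 + a.1*t, a.2.2.1 + a.1*(a.2.1 + a.1*t), a.2.2.2 + a.1*t^2)

lemma inc_lineThrough (a : F × F × F × F) (t : F) : Inc a (lineThrough a t) :=
  ⟨rfl, rfl, rfl⟩

variable {n : ℕ} (ι : ((F × F × F × F) ⊕ (F × F × F × F)) ↪ Fin n)

/-- An injective family of edges. -/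
def edgeMap (x : (F × F × F × F) × F) : Sym2 (Fin n) :=
  s(ι (Sum.inl x.1), ι (Sum.inr (lineThrough x.1 x.2)))

lemma edgeMap_mem (x : (F × F × F × F) × F) :
    edgeMap ι x ∈ ((VWGraph F).map ι).edgeSet := by
  rw [edgeMap, SimpleGraph.mem_edgeSet, SimpleGraph.map_adj]
  exact ⟨Sum.inl x.1, Sum.inr (lineThrough x.1 x.2), inc_lineThrough x.1 x.2, rfl, rfl⟩

lemma edgeMap_inj : Function.Injective (edgeMap ι) := by
  rintro ⟨a, t⟩ ⟨a', t'⟩ h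
  rw [edgeMap, edgeMap, Sym2.eq_iff] at h
  rcases h with ⟨h1, h2⟩ | ⟨h1, h2⟩
  · have ha := ι.injective h1
    have hl := ι.injective h2
    have ha' : a = a' := by injection ha
    have hl' : lineThrough a t = lineThrough a' t' := by injection hl
    have ht : t = t' := congrArg Prod.fst hl'
    rw [ha', ht]
  · exact absurd (ι.injective h1) (by simp)

lemma edge_count : (Fintype.card F)^5 ≤ ((VWGraph F).map ι).edgeSet.ncard := by
  have h1 : (Set.range (edgeMap ι)).ncard = Fintype.card ((F × F × F × F) × F) := by
    rw [← Set.image_univ, Set.ncard_image_of_injective _ (edgeMap_inj ι), Set.ncard_univ,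
      Nat.card_eq_fintype_card]
  have h2 : Set.range (edgeMap ι) ⊆ ((VWGraph F).map ι).edgeSet := by
    rintro _ ⟨x, rfl⟩; exact edgeMap_mem ι x
  have h3 : Fintype.card ((F × F × F × F) × F) = (Fintype.card F)^5 := by
    simp only [Fintype.card_prod]; ring
  calc (Fintype.card F)^5 = (Set.range (edgeMap ι)).ncard := by rw [h1, h3]
    _ ≤ ((VWGraph F).map ι).edgeSet.ncard := Set.ncard_le_ncard h2 (Set.toFinite _)

lemma map_free (hfree : ¬ ContainsCopy (VWGraph F) thetaFourThree) :
    ¬ ContainsCopy ((VWGraph F).map ι) thetaFourThree := by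
  rintro ⟨f, hinj, hedge⟩
  apply hfree
  have hrange : ∀ u, ∃ x, ι x = f u := by
    intro u
    obtain ⟨v, hv⟩ := theta_no_isolated u
    have h := hedge u v hv
    rw [SimpleGraph.map_adj] at h
    obtain ⟨x, y, _, hx, _⟩ := h
    exact ⟨x, hx⟩
  choose g hg using hrange
  refine ⟨g, ?_, ?_⟩
  · intro u v h
    apply hinj
    rw [← hg u, ← hg v, h]
  · intro u v h
    have h' := hedge u v h
    rw [SimpleGraph.map_adj] at h'
    obtain ⟨x, y, hxy, hx, hy⟩ := h'
    have hx' : x = g u := ι.injective (by rw [hg, hx])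
    have hy' : y = g v := ι.injective (by rw [hg, hy])
    rwa [hx', hy'] at hxy

end Count

section NumberTheory

lemma choose_prime {n : ℕ} (hn : 1024 ≤ n) :
    ∃ p : ℕ, p.Prime ∧ 3 ≤ p ∧ 2*p^4 ≤ n ∧ n ≤ 256*p^4 := by
  set s := Nat.sqrt (n / 2) with hs
  set m := Nat.sqrt s with hm
  have h256 : 256 ≤ n / 2 := by omega
  have h16 : 16 ≤ s := Nat.le_sqrt.mpr (by omega)
  have hm4 : 4 ≤ m := Nat.le_sqrt.mpr (by omega)
  obtain ⟨p, pp, hp1, hp2⟩ := Nat.exists_prime_lt_and_le_two_mul (m/2) (by omega)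
  have hpm : p ≤ m := le_trans hp2 (by omega)
  have h3p : 3 ≤ p := by omega
  have hsq1 : m*m ≤ s := Nat.sqrt_le s
  have hsq2 : s*s ≤ n/2 := Nat.sqrt_le (n/2)
  refine ⟨p, pp, h3p, ?_, ?_⟩
  · have h1 : p^4 ≤ m^4 := Nat.pow_le_pow_left hpm 4
    have h2 : m^4 ≤ n/2 := by nlinarith
    omega
  · have h1 : m + 1 ≤ 2*p := by omega
    have h2 : n/2 < (s+1)*(s+1) := Nat.lt_succ_sqrt (n/2)
    have h3 : s < (m+1)*(m+1) := Nat.lt_succ_sqrt s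
    have h4 : n/2 < (m+1)^4 := by nlinarith
    have h5 : (m+1)^4 ≤ (2*p)^4 := Nat.pow_le_pow_left h1 4
    have h6 : n ≤ 2*(n/2) + 1 := by omega
    have : (2*p)^4 = 16*p^4 := by ring
    nlinarith
end NumberTheory

theorem stmt_13 :
    ∃ c : ℝ, 0 < c ∧ ∃ n0 : ℕ, ∀ n : ℕ, n0 ≤ n →
      ∃ G : SimpleGraph (Fin n), ¬ ContainsCopy G thetaFourThree ∧
        c * (n : ℝ) ^ ((5 : ℝ) / 4) ≤ (G.edgeSet.ncard : ℝ) := by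
  refine ⟨1/1024, by norm_num, 1024, ?_⟩
  intro n hn
  obtain ⟨p, pp, h3p, hle, hge⟩ := choose_prime hn
  haveI : Fact p.Prime := ⟨pp⟩
  have h2F : (2 : ZMod p) ≠ 0 := by
    have : ((2:ℕ) : ZMod p) ≠ 0 := by
      rw [Ne, ZMod.natCast_eq_zero_iff]
      intro hdvd
      have := Nat.le_of_dvd (by norm_num) hdvd
      omega
    simpa using this
  have hcardF : Fintype.card (ZMod p) = p := ZMod.card p
  have hcardV : Fintype.card ((ZMod p × ZMod p × ZMod p × ZMod p) ⊕
      (ZMod p × ZMod p × ZMod p × ZMod p)) = 2*p^4 := by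
    simp [hcardF]; ring
  obtain ⟨ι⟩ : Nonempty (((ZMod p × ZMod p × ZMod p × ZMod p) ⊕
      (ZMod p × ZMod p × ZMod p × ZMod p)) ↪ Fin n) := by
    apply Function.Embedding.nonempty_of_card_le
    rw [hcardV, Fintype.card_fin]
    exact hle
  refine ⟨(VWGraph (ZMod p)).map ι, map_free ι (vw_free h2F), ?_⟩
  have hcount : p^5 ≤ ((VWGraph (ZMod p)).map ι).edgeSet.ncard := by
    have := edge_count ι (F := ZMod p)
    rwa [hcardF] at this
  have hn0 : (0:ℝ) ≤ (n:ℝ) := by positivity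
  have h1 : (n:ℝ) ^ ((5:ℝ)/4) ≤ ((256*p^4 : ℕ):ℝ) ^ ((5:ℝ)/4) :=
    Real.rpow_le_rpow hn0 (by exact_mod_cast hge) (by norm_num)
  have e1 : (256:ℝ) ^ ((5:ℝ)/4) = 1024 := by
    rw [show (256:ℝ) = 2^(8:ℕ) by norm_num, ← Real.rpow_natCast 2 8,
      ← Real.rpow_mul (by norm_num)]
    rw [show ((8:ℕ):ℝ)*((5:ℝ)/4) = ((10:ℕ):ℝ) by push_cast; norm_num, Real.rpow_natCast]
    norm_num
  have e2 : ((p:ℝ)^(4:ℕ)) ^ ((5:ℝ)/4) = (p:ℝ)^(5:ℕ) := by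
    rw [← Real.rpow_natCast (p:ℝ) 4, ← Real.rpow_mul (by positivity)]
    rw [show ((4:ℕ):ℝ)*((5:ℝ)/4) = ((5:ℕ):ℝ) by push_cast; norm_num, Real.rpow_natCast]
  have h2 : ((256*p^4 : ℕ):ℝ) ^ ((5:ℝ)/4) = 1024 * (p:ℝ)^5 := by
    push_cast
    rw [Real.mul_rpow (by norm_num) (by positivity), e1, e2]
  calc (1/1024:ℝ) * (n:ℝ)^((5:ℝ)/4) ≤ (1/1024) * (1024 * (p:ℝ)^5) := by
        rw [← h2]; exact mul_le_mul_of_nonneg_left h1 (by norm_num)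
    _ = (p:ℝ)^5 := by ring
    _ ≤ (((VWGraph (ZMod p)).map ι).edgeSet.ncard : ℝ) := by exact_mod_cast hcount
end

section
/- For every prime p, all x₁, x₂, x₃, y₁, y₂, y₃ ∈ S₁, and all a, b ∈ F_p \ {0}: if the three-element sets e(x₁,x₂,x₃,a) and e(y₁,y₂,y₃,b) have at least two elements in common, then (x₁,x₂,x₃,a) = (y₁,y₂,y₃,b), and hence e(x₁,x₂,x₃,a) = e(y₁,y₂,y₃,b). Consequently the hypergraph H is linear: any two distinct edges of H share at most one vertex. -/
/-- The conditions required of the set `S₁ ⊆ F_p`. -/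
def S1Cond (p : ℕ) (S1 : Set (ZMod p)) : Prop :=
  ∀ x ∈ S1,
    (2 ≤ x.val ∧ x.val ≤ (p - 1) / 2) ∧
    (∀ w : ZMod p, x ≠ -w ^ 2) ∧
    x ^ 2 - 4 * x + 1 ≠ 0 ∧
    3 * x ≠ 1 ∧ 3 * x ≠ 2 ∧
    10872 * x ^ 5 - 12757 * x ^ 4 + 3369 * x ^ 3 + 2312 * x ^ 2
      - 1176 * x - 144 ≠ 0

/-- `S₂ = F_p \ {0, 1}`. -/
def S2set (p : ℕ) : Set (ZMod p) := {x | x ≠ 0 ∧ x ≠ 1}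

/-- The part `V_i = S₁ × S₂ × S₂ × {i}` of the vertex set. -/
def Vpart (p : ℕ) (S1 : Set (ZMod p)) (i : ℕ) : Set (ZMod p × ZMod p × ZMod p × ℕ) :=
  {v | v.1 ∈ S1 ∧ v.2.1 ∈ S2set p ∧ v.2.2.1 ∈ S2set p ∧ v.2.2.2 = i}

/-- The triple `e(x₁, x₂, x₃, a)`. -/
def hedge (p : ℕ) (x1 x2 x3 a : ZMod p) : Set (ZMod p × ZMod p × ZMod p × ℕ) :=
  {(x1, x2 * x3 + a, x2 ^ 2 * x3 + a, 1),
   (x2, x3 * x1 + a, x3 ^ 2 * x1 + a, 2),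
   (x3, x1 * x2 + a, x1 ^ 2 * x2 + a, 3)}

/-- The edge set of the hypergraph `H`. -/
def Hedges (p : ℕ) (S1 : Set (ZMod p)) : Set (Set (ZMod p × ZMod p × ZMod p × ℕ)) :=
  {E | ∃ x1 x2 x3 a : ZMod p, x1 ∈ S1 ∧ x2 ∈ S1 ∧ x3 ∈ S1 ∧ a ≠ 0 ∧
    E = hedge p x1 x2 x3 a ∧
    E ⊆ Vpart p S1 1 ∪ Vpart p S1 2 ∪ Vpart p S1 3}

lemma S1_ne01 {p : ℕ} (hp : p.Prime) {S1 : Set (ZMod p)} (hS1 : S1Cond p S1)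
    {x : ZMod p} (hx : x ∈ S1) : x ≠ 0 ∧ x ≠ 1 := by
  haveI : Fact p.Prime := ⟨hp⟩
  obtain ⟨⟨h2, _⟩, _⟩ := hS1 x hx
  constructor <;> rintro rfl
  · simp [ZMod.val_zero] at h2
  · rw [ZMod.val_one] at h2 <;> omega

lemma solve_pair {p : ℕ} [Fact p.Prime] {c x y a b : ZMod p}
    (hc0 : c ≠ 0) (hc1 : c ≠ 1)
    (h2 : c * x + a = c * y + b) (h3 : c ^ 2 * x + a = c ^ 2 * y + b) :
    x = y ∧ a = b := by
  have h : c * (c - 1) * (x - y) = 0 := by linear_combination h3 - h2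
  have hxy : x = y := by
    rcases mul_eq_zero.mp h with h' | h'
    · rcases mul_eq_zero.mp h' with h0 | h1
      · exact absurd h0 hc0
      · exact absurd (sub_eq_zero.mp h1) hc1
    · exact sub_eq_zero.mp h'
  refine ⟨hxy, ?_⟩
  linear_combination h2 - c * hxy

theorem stmt_14 (p : ℕ) (hp : p.Prime) (S1 : Set (ZMod p)) (hS1 : S1Cond p S1) :
    (∀ x1 x2 x3 y1 y2 y3 : ZMod p, x1 ∈ S1 → x2 ∈ S1 → x3 ∈ S1 →
      y1 ∈ S1 → y2 ∈ S1 → y3 ∈ S1 → ∀ a b : ZMod p, a ≠ 0 → b ≠ 0 →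
      2 ≤ (hedge p x1 x2 x3 a ∩ hedge p y1 y2 y3 b).encard →
      (x1, x2, x3, a) = (y1, y2, y3, b) ∧
        hedge p x1 x2 x3 a = hedge p y1 y2 y3 b) ∧
    (∀ E1 ∈ Hedges p S1, ∀ E2 ∈ Hedges p S1, E1 ≠ E2 → (E1 ∩ E2).encard ≤ 1) := by
  haveI : Fact p.Prime := ⟨hp⟩
  have main : ∀ x1 x2 x3 y1 y2 y3 : ZMod p, x1 ∈ S1 → x2 ∈ S1 → x3 ∈ S1 →
      y1 ∈ S1 → y2 ∈ S1 → y3 ∈ S1 → ∀ a b : ZMod p, a ≠ 0 → b ≠ 0 →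
      2 ≤ (hedge p x1 x2 x3 a ∩ hedge p y1 y2 y3 b).encard →
      (x1, x2, x3, a) = (y1, y2, y3, b) ∧
        hedge p x1 x2 x3 a = hedge p y1 y2 y3 b := by
    intro x1 x2 x3 y1 y2 y3 hx1 hx2 hx3 hy1 hy2 hy3 a b ha hb hcard
    obtain ⟨hx10, hx11⟩ := S1_ne01 hp hS1 hx1
    obtain ⟨hx20, hx21⟩ := S1_ne01 hp hS1 hx2
    obtain ⟨hx30, hx31⟩ := S1_ne01 hp hS1 hx3
    obtain ⟨u, v, ⟨hu1, hu2⟩, ⟨hv1, hv2⟩, huv⟩ :=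
      Set.one_lt_encard_iff.mp (lt_of_lt_of_le (by norm_num : (1:ℕ∞) < 2) hcard)
    have key : (x1, x2, x3, a) = (y1, y2, y3, b) := by
      simp only [hedge, Set.mem_insert_iff, Set.mem_singleton_iff] at hu1 hu2 hv1 hv2
      rcases hu1 with rfl | rfl | rfl <;> rcases hv1 with rfl | rfl | rfl <;>
        [skip; skip; skip; skip; skip; skip; skip; skip; skip]
      · exact absurd rfl huv
      · -- u tag 1, v tag 2
        simp only [Prod.mk.injEq] at hu2 hv2
        rcases hu2 with h | h | h <;> [skip; omega; omega]
        rcases hv2 with h' | h' | h' <;> [omega; skip; omega]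
        obtain ⟨e1, e2, e3, -⟩ := h
        obtain ⟨f1, f2, f3, -⟩ := h'
        subst e1; subst f1
        obtain ⟨h3, hab⟩ := solve_pair hx20 hx21 e2 e3
        subst h3; subst hab; rfl
      · -- u tag 1, v tag 3
        simp only [Prod.mk.injEq] at hu2 hv2
        rcases hu2 with h | h | h <;> [skip; omega; omega]
        rcases hv2 with h' | h' | h' <;> [omega; omega; skip]
        obtain ⟨e1, e2, e3, -⟩ := h
        obtain ⟨f1, f2, f3, -⟩ := h'
        subst e1; subst f1
        obtain ⟨h2, hab⟩ := solve_pair hx10 hx11 f2 f3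
        subst h2; subst hab; rfl
      · -- u tag 2, v tag 1
        simp only [Prod.mk.injEq] at hu2 hv2
        rcases hu2 with h | h | h <;> [omega; skip; omega]
        rcases hv2 with h' | h' | h' <;> [skip; omega; omega]
        obtain ⟨e1, e2, e3, -⟩ := h
        obtain ⟨f1, f2, f3, -⟩ := h'
        subst e1; subst f1
        obtain ⟨h3, hab⟩ := solve_pair hx20 hx21 f2 f3
        subst h3; subst hab; rfl
      · exact absurd rfl huv
      · -- u tag 2, v tag 3
        simp only [Prod.mk.injEq] at hu2 hv2
        rcases hu2 with h | h | h <;> [omega; skip; omega]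
        rcases hv2 with h' | h' | h' <;> [omega; omega; skip]
        obtain ⟨e1, e2, e3, -⟩ := h
        obtain ⟨f1, f2, f3, -⟩ := h'
        subst e1; subst f1
        obtain ⟨h1, hab⟩ := solve_pair hx30 hx31 e2 e3
        subst h1; subst hab; rfl
      · -- u tag 3, v tag 1
        simp only [Prod.mk.injEq] at hu2 hv2
        rcases hu2 with h | h | h <;> [omega; omega; skip]
        rcases hv2 with h' | h' | h' <;> [skip; omega; omega]
        obtain ⟨e1, e2, e3, -⟩ := h
        obtain ⟨f1, f2, f3, -⟩ := h'
        subst e1; subst f1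
        obtain ⟨h2, hab⟩ := solve_pair hx10 hx11 e2 e3
        subst h2; subst hab; rfl
      · -- u tag 3, v tag 2
        simp only [Prod.mk.injEq] at hu2 hv2
        rcases hu2 with h | h | h <;> [omega; omega; skip]
        rcases hv2 with h' | h' | h' <;> [omega; skip; omega]
        obtain ⟨e1, e2, e3, -⟩ := h
        obtain ⟨f1, f2, f3, -⟩ := h'
        subst e1; subst f1
        obtain ⟨h1, hab⟩ := solve_pair hx30 hx31 f2 f3
        subst h1; subst hab; rfl
      · exact absurd rfl huv
    refine ⟨key, ?_⟩
    simp only [Prod.mk.injEq] at key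
    obtain ⟨rfl, rfl, rfl, rfl⟩ := key
    rfl
  refine ⟨main, ?_⟩
  intro E1 hE1 E2 hE2 hne
  by_contra hcon
  push_neg at hcon
  obtain ⟨x1, x2, x3, a, hx1, hx2, hx3, ha, rfl, -⟩ := hE1
  obtain ⟨y1, y2, y3, b, hy1, hy2, hy3, hb, rfl, -⟩ := hE2
  obtain ⟨u, v, hu, hv, huv⟩ := Set.one_lt_encard_iff.mp hcon
  have h2 : 2 ≤ (hedge p x1 x2 x3 a ∩ hedge p y1 y2 y3 b).encard := by
    calc (2 : ℕ∞) = ({u, v} : Set _).encard := (Set.encard_pair huv).symm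
    _ ≤ _ := Set.encard_mono (by rintro w (rfl | rfl) <;> simpa)
  exact hne (main x1 x2 x3 y1 y2 y3 hx1 hx2 hx3 hy1 hy2 hy3 a b ha hb h2).2
end

section
/- There exists p₀ such that for every prime p ≥ p₀ the following holds: the hypergraph H contains no Berge 4-cycle of type (1,2,1,2), i.e., there do not exist pairwise distinct vertices v₁ ∈ V₁, v₂ ∈ V₂, v₃ ∈ V₁, v₄ ∈ V₂ and pairwise distinct edges e₁, e₂, e₃, e₄ of H such that {v₁,v₂} ⊆ e₁, {v₂,v₃} ⊆ e₂, {v₃,v₄} ⊆ e₃, and {v₄,v₁} ⊆ e₄. -/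
lemma tag1_eq {p : ℕ} {x1 x2 x3 a : ZMod p} {v : ZMod p × ZMod p × ZMod p × ℕ}
    (h : v ∈ hedge p x1 x2 x3 a) (ht : v.2.2.2 = 1) :
    v = (x1, x2 * x3 + a, x2 ^ 2 * x3 + a, 1) := by
  rcases h with h | h | h <;> subst h <;> simp_all

lemma tag2_eq {p : ℕ} {x1 x2 x3 a : ZMod p} {v : ZMod p × ZMod p × ZMod p × ℕ}
    (h : v ∈ hedge p x1 x2 x3 a) (ht : v.2.2.2 = 2) :
    v = (x2, x3 * x1 + a, x3 ^ 2 * x1 + a, 2) := by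
  rcases h with h | h | h <;> subst h <;> simp_all

theorem stmt_15 :
    ∃ p0 : ℕ, ∀ p : ℕ, p.Prime → p0 ≤ p →
      ∀ S1 : Set (ZMod p), S1Cond p S1 →
        ¬ ∃ (v1 v2 v3 v4 : ZMod p × ZMod p × ZMod p × ℕ)
            (e1 e2 e3 e4 : Set (ZMod p × ZMod p × ZMod p × ℕ)),
          v1 ∈ Vpart p S1 1 ∧ v2 ∈ Vpart p S1 2 ∧
          v3 ∈ Vpart p S1 1 ∧ v4 ∈ Vpart p S1 2 ∧
          [v1, v2, v3, v4].Pairwise (· ≠ ·) ∧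
          [e1, e2, e3, e4].Pairwise (· ≠ ·) ∧
          e1 ∈ Hedges p S1 ∧ e2 ∈ Hedges p S1 ∧
          e3 ∈ Hedges p S1 ∧ e4 ∈ Hedges p S1 ∧
          {v1, v2} ⊆ e1 ∧ {v2, v3} ⊆ e2 ∧ {v3, v4} ⊆ e3 ∧ {v4, v1} ⊆ e4 := by
  refine ⟨2, ?_⟩
  intro p hp _hp2 S1 hS1
  haveI : Fact p.Prime := ⟨hp⟩
  rintro ⟨v1, v2, v3, v4, e1, e2, e3, e4, hv1, hv2, hv3, hv4, _hvd, hed,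
    he1, he2, he3, he4, h12, h23, h34, h41⟩
  obtain ⟨X1, Y1, Z1, A1, hX1, hY1, hZ1, hA1, hE1, -⟩ := he1
  obtain ⟨X2, Y2, Z2, A2, hX2, hY2, hZ2, hA2, hE2, -⟩ := he2
  obtain ⟨X3, Y3, Z3, A3, hX3, hY3, hZ3, hA3, hE3, -⟩ := he3
  obtain ⟨X4, Y4, Z4, A4, hX4, hY4, hZ4, hA4, hE4, -⟩ := he4
  -- basic facts about S1 elements
  have key : ∀ x ∈ S1, x ≠ 0 ∧ x ≠ 1 := by
    intro x hx
    obtain ⟨⟨h2, -⟩, -⟩ := hS1 x hx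
    constructor
    · rintro rfl; simp [ZMod.val_zero] at h2
    · rintro rfl
      have : (1 : ZMod p).val = 1 % p := ZMod.val_one_eq_one_mod p
      have hp2 : 1 % p = 1 := Nat.mod_eq_of_lt hp.one_lt
      omega
  -- pairwise distinctness of edges
  simp only [List.pairwise_cons, List.mem_cons, List.not_mem_nil, or_false,
    List.mem_singleton, List.Pairwise.nil, and_true] at hed
  have hne12 : e1 ≠ e2 := by
    apply hed.1; left; rfl
  have hne23 : e2 ≠ e3 := by
    apply hed.2.1; left; rfl
  -- tags
  have t1 : v1.2.2.2 = 1 := hv1.2.2.2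
  have t2 : v2.2.2.2 = 2 := hv2.2.2.2
  have t3 : v3.2.2.2 = 1 := hv3.2.2.2
  have t4 : v4.2.2.2 = 2 := hv4.2.2.2
  -- memberships
  have m11 : v1 ∈ e1 := h12 (by simp)
  have m21 : v2 ∈ e1 := h12 (by simp)
  have m22 : v2 ∈ e2 := h23 (by simp)
  have m32 : v3 ∈ e2 := h23 (by simp)
  have m33 : v3 ∈ e3 := h34 (by simp)
  have m43 : v4 ∈ e3 := h34 (by simp)
  have m44 : v4 ∈ e4 := h41 (by simp)
  have m14 : v1 ∈ e4 := h41 (by simp)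
  rw [hE1] at m11 m21
  rw [hE2] at m22 m32
  rw [hE3] at m33 m43
  rw [hE4] at m44 m14
  have q11 := tag1_eq m11 t1
  have q14 := tag1_eq m14 t1
  have q21 := tag2_eq m21 t2
  have q22 := tag2_eq m22 t2
  have q32 := tag1_eq m32 t3
  have q33 := tag1_eq m33 t3
  have q43 := tag2_eq m43 t4
  have q44 := tag2_eq m44 t4
  have hv1e := q11.symm.trans q14
  have hv2e := q21.symm.trans q22
  have hv3e := q32.symm.trans q33
  have hv4e := q43.symm.trans q44
  simp only [Prod.mk.injEq] at hv1e hv2e hv3e hv4e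
  obtain ⟨hX14, E1, E2, -⟩ := hv1e
  obtain ⟨hY12, E3, E4, -⟩ := hv2e
  obtain ⟨hX23, E5, E6, -⟩ := hv3e
  obtain ⟨hY34, E7, E8, -⟩ := hv4e
  -- identify repeated parameters
  subst hX14; subst hX23; subst hY12; subst hY34
  -- now: e1 = hedge X1 Y1 Z1 A1, e2 = hedge X2 Y1 Z2 A2,
  --      e3 = hedge X2 Y3 Z3 A3, e4 = hedge X1 Y3 Z4 A4
  -- with equations
  -- E1 : Y1*Z1+A1 = Y3*Z4+A4,  E2 : Y1^2*Z1+A1 = Y3^2*Z4+A4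
  -- E3 : Z1*X1+A1 = Z2*X2+A2,  E4 : Z1^2*X1+A1 = Z2^2*X2+A2
  -- E5 : Y1*Z2+A2 = Y3*Z3+A3,  E6 : Y1^2*Z2+A2 = Y3^2*Z3+A3
  -- E7 : Z3*X2+A3 = Z4*X1+A4,  E8 : Z3^2*X2+A3 = Z4^2*X1+A4
  obtain ⟨hX10, hX11⟩ := key _ hX1
  obtain ⟨hX20, hX21⟩ := key _ hX2
  obtain ⟨hY10, hY11⟩ := key _ hY1
  obtain ⟨hY30, hY31⟩ := key _ hY3
  obtain ⟨hZ10, hZ11⟩ := key _ hZ1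
  obtain ⟨hZ20, hZ21⟩ := key _ hZ2
  obtain ⟨hZ30, hZ31⟩ := key _ hZ3
  obtain ⟨hZ40, hZ41⟩ := key _ hZ4
  have hY1s : Y1 - 1 ≠ 0 := sub_ne_zero.mpr hY11
  have hZ1s : Z1 - 1 ≠ 0 := sub_ne_zero.mpr hZ11
  have R1 : X1 * (Z1 ^ 2 - Z1) = X2 * (Z2 ^ 2 - Z2) := by linear_combination E4 - E3
  have R2 : (Y1 ^ 2 - Y1) * Z2 = (Y3 ^ 2 - Y3) * Z3 := by linear_combination E6 - E5
  have R3 : X2 * (Z3 ^ 2 - Z3) = X1 * (Z4 ^ 2 - Z4) := by linear_combination E8 - E7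
  have R4 : (Y1 ^ 2 - Y1) * Z1 = (Y3 ^ 2 - Y3) * Z4 := by linear_combination E2 - E1
  -- R5 : Z2 * Z4 = Z1 * Z3
  have h5 : (Y1 * (Y1 - 1)) * (Z2 * Z4 - Z1 * Z3) = 0 := by
    linear_combination Z4 * R2 - Z3 * R4
  have R5 : Z2 * Z4 = Z1 * Z3 := by
    rcases mul_eq_zero.mp h5 with h | h
    · exact absurd h (mul_ne_zero hY10 hY1s)
    · exact sub_eq_zero.mp h
  -- P : product relation
  have hP0 : (X1 * X2) * (Z1 * (Z1 - 1) * (Z3 * (Z3 - 1)) - Z2 * (Z2 - 1) * (Z4 * (Z4 - 1))) = 0 := by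
    linear_combination X2 * (Z3 ^ 2 - Z3) * R1 + X2 * (Z2 ^ 2 - Z2) * R3
  have P : Z1 * (Z1 - 1) * (Z3 * (Z3 - 1)) = Z2 * (Z2 - 1) * (Z4 * (Z4 - 1)) := by
    rcases mul_eq_zero.mp hP0 with h | h
    · exact absurd h (mul_ne_zero hX10 hX20)
    · exact sub_eq_zero.mp h
  have h7 : (Z1 * Z3) * ((Z2 + Z4) - (Z1 + Z3)) = 0 := by
    linear_combination P + (Z1 * Z3 + Z2 * Z4 + 1 - Z2 - Z4) * R5
  have S6 : Z2 + Z4 = Z1 + Z3 := by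
    rcases mul_eq_zero.mp h7 with h | h
    · exact absurd h (mul_ne_zero hZ10 hZ30)
    · exact sub_eq_zero.mp h
  have hsplit : (Z2 - Z1) * (Z2 - Z3) = 0 := by
    linear_combination Z2 * S6 - R5
  -- final contradiction: e1 = e2 from collapsed parameters
  have finale12 : Z2 = Z1 → False := by
    intro hZ
    have hX : X1 = X2 := by
      have hx0 : (X1 - X2) * (Z1 * (Z1 - 1)) = 0 := by
        rw [hZ] at R1; linear_combination R1
      rcases mul_eq_zero.mp hx0 with h | h
      · exact sub_eq_zero.mp h
      · exact absurd h (mul_ne_zero hZ10 hZ1s)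
    have hA : A1 = A2 := by
      rw [hZ, ← hX] at E3; exact add_left_cancel E3
    exact hne12 (by rw [hE1, hE2, hX, hZ, hA])
  rcases mul_eq_zero.mp hsplit with h | h
  · exact finale12 (sub_eq_zero.mp h)
  · -- Case B : Z2 = Z3, hence Z4 = Z1
    have hZ23 : Z2 = Z3 := sub_eq_zero.mp h
    have hZ41 : Z4 = Z1 := by linear_combination S6 - hZ23
    by_cases hY : Y1 = Y3
    · -- e2 = e3
      have hA : A2 = A3 := by
        rw [hZ23, hY] at E5; exact add_left_cancel E5
      exact hne23 (by rw [hE2, hE3, hY, hZ23, hA])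
    · -- Y1 ≠ Y3 : forces Z1 = Z3, then e1 = e2
      have hB : (Y3 - Y1) * (Z1 - Z3) = 0 := by
        linear_combination E5 - E1 + E3 + E7 + (X1 - Y3) * hZ41 + (X2 - Y1) * hZ23
      have hZ13 : Z1 = Z3 := by
        rcases mul_eq_zero.mp hB with h' | h'
        · exact absurd (sub_eq_zero.mp h') (Ne.symm hY)
        · exact sub_eq_zero.mp h'
      exact finale12 (hZ23.trans hZ13.symm)
end
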